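/- arXiv:0710.1902 — 6 statements merged into one kernel-verified Lean document; each statement's English description precedes it below -/
import Mathlib

section
/- If f = g ∘ h where f is a nonconstant complex Laurent polynomial (a rational function whose only possible poles are 0 and ∞) and g, h ∈ ℂ(x), then there exists a degree-one rational function μ ∈ ℂ(x) such that, setting G = g ∘ μ and H = μ^{−1} ∘ h, either (1) G is a polynomial and H is a Laurent polynomial, or (2) G is a Laurent polynomial and H = x^n for some positive integer n. -/
open Polynomial

noncomputable def rcomp (f g : RatFunc ℂ) : RatFunc ℂ :=
  RatFunc.eval (algebraMap ℂ (RatFunc ℂ)) g f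

/-- A Laurent polynomial: a rational function whose only poles are `0` and `∞`. -/
def IsLaurent (f : RatFunc ℂ) : Prop :=
  ∃ (p : Polynomial ℂ) (k : ℕ),
    f = algebraMap (Polynomial ℂ) (RatFunc ℂ) p / RatFunc.X ^ k

/-- A degree-one (Möbius) rational function. -/
def IsMobius (μ : RatFunc ℂ) : Prop :=
  ∃ a b c d : ℂ, a * d - b * c ≠ 0 ∧
    μ = (RatFunc.C a * RatFunc.X + RatFunc.C b) / (RatFunc.C c * RatFunc.X + RatFunc.C d)

namespace LD

local notation "K" => RatFunc ℂ
local notation "alg" => algebraMap (Polynomial ℂ) (RatFunc ℂ)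

lemma algC (c : ℂ) : alg (C c) = RatFunc.C c := RatFunc.algebraMap_C c

lemma algMapC (c : ℂ) : algebraMap ℂ K c = RatFunc.C c := by
  rw [IsScalarTower.algebraMap_apply ℂ (Polynomial ℂ) K, Polynomial.algebraMap_eq, algC]

lemma aeval_prod_roots (t : K) (r : Polynomial ℂ) (hr : r ≠ 0) :
    (Polynomial.aeval t) r = RatFunc.C r.leadingCoeff *
      (r.roots.map (fun z => t - RatFunc.C z)).prod := by
  conv_lhs => rw [← C_leadingCoeff_mul_prod_multiset_X_sub_C
    (Polynomial.splits_iff_card_roots.mp (IsAlgClosed.splits r))]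
  rw [map_mul, map_multiset_prod, Multiset.map_map]
  simp [algMapC]

lemma aeval_ne_zero {t : K} (ht : ∀ c : ℂ, t ≠ RatFunc.C c) {r : Polynomial ℂ}
    (hr : r ≠ 0) : (Polynomial.aeval t) r ≠ 0 := by
  rw [aeval_prod_roots t r hr]
  refine mul_ne_zero ?_ (Multiset.prod_ne_zero ?_)
  · rw [← algMapC]
    exact (_root_.map_ne_zero _).mpr (leadingCoeff_ne_zero.mpr hr)
  · intro h0
    obtain ⟨z, _, hz⟩ := Multiset.mem_map.mp h0
    exact ht z (sub_eq_zero.mp hz)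

lemma cmp_inj {t : K} (ht : ∀ c : ℂ, t ≠ RatFunc.C c) :
    Function.Injective (Polynomial.aeval t : Polynomial ℂ →ₐ[ℂ] K) := by
  rw [injective_iff_map_eq_zero]
  intro r hr
  by_contra h0
  exact aeval_ne_zero ht h0 hr

noncomputable def cmp (t : K) (ht : ∀ c : ℂ, t ≠ RatFunc.C c) : RatFunc ℂ →ₐ[ℂ] RatFunc ℂ :=
  RatFunc.liftAlgHom (Polynomial.aeval t)
    (nonZeroDivisors_le_comap_nonZeroDivisors_of_injective _ (cmp_inj ht))

lemma cmp_apply {t : K} (ht : ∀ c : ℂ, t ≠ RatFunc.C c) (r : K) :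
    cmp t ht r = Polynomial.aeval t r.num / Polynomial.aeval t r.denom :=
  RatFunc.liftAlgHom_apply _ _ _

lemma rcomp_cmp {t : K} (ht : ∀ c : ℂ, t ≠ RatFunc.C c) (r : K) :
    rcomp r t = cmp t ht r := by
  rw [rcomp, RatFunc.eval, cmp_apply, Polynomial.aeval_def, Polynomial.aeval_def]

lemma cmp_alg {t : K} (ht : ∀ c : ℂ, t ≠ RatFunc.C c) (r : Polynomial ℂ) :
    cmp t ht (alg r) = Polynomial.aeval t r := by
  have := RatFunc.liftAlgHom_apply_div (φ := Polynomial.aeval t)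
    (hφ := nonZeroDivisors_le_comap_nonZeroDivisors_of_injective _ (cmp_inj ht)) r 1
  simpa [cmp] using this

lemma alg_ne_zero {r : Polynomial ℂ} (hr : r ≠ 0) : alg r ≠ 0 :=
  RatFunc.algebraMap_ne_zero hr

lemma sub_C_div {u v : Polynomial ℂ} (hv : v ≠ 0) (z : ℂ) :
    alg u / alg v - RatFunc.C z = alg (u - C z * v) / alg v := by
  rw [div_sub' (alg_ne_zero hv), map_sub, map_mul, algC]
  ring_nf

lemma rcomp_repr (g : K) (hg : g ≠ 0) (u v : Polynomial ℂ) (hv : v ≠ 0)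
    (hnc : ∀ c : ℂ, alg u / alg v ≠ RatFunc.C c) :
    rcomp g (alg u / alg v) =
      alg (C g.num.leadingCoeff * (g.num.roots.map fun z => u - C z * v).prod
          * v ^ g.denom.roots.card) /
      alg (C g.denom.leadingCoeff * (g.denom.roots.map fun z => u - C z * v).prod
          * v ^ g.num.roots.card) := by
  set t := alg u / alg v with hT
  rw [rcomp_cmp hnc]
  conv_lhs => rw [← RatFunc.num_div_denom g]
  rw [map_div₀, cmp_alg hnc, cmp_alg hnc,
    aeval_prod_roots t _ (RatFunc.num_ne_zero hg),
    aeval_prod_roots t _ (RatFunc.denom_ne_zero g)]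
  have key : ∀ r : Polynomial ℂ,
      (r.roots.map (fun z => t - RatFunc.C z)).prod =
        alg ((r.roots.map fun z => u - C z * v).prod) / alg v ^ r.roots.card := by
    intro r
    have : (r.roots.map (fun z => t - RatFunc.C z)) =
        r.roots.map (fun z => alg (u - C z * v) / alg v) := by
      apply Multiset.map_congr rfl
      intro z _
      rw [hT, sub_C_div hv]
    rw [this, Multiset.prod_map_div, map_multiset_prod, Multiset.map_map]
    simp
  rw [key, key, mul_div_assoc', mul_div_assoc', div_div_div_eq]
  rw [map_mul, map_mul, map_mul, map_mul, map_pow, map_pow, algC, algC]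
  ring

lemma rcomp_lin (α β γ δ : ℂ) (p q : Polynomial ℂ) (hq : q ≠ 0)
    (hnc : ∀ c : ℂ, (alg p / alg q) ≠ RatFunc.C c) :
    rcomp (alg (C α * X + C β) / alg (C γ * X + C δ)) (alg p / alg q) =
      alg (C α * p + C β * q) / alg (C γ * p + C δ * q) := by
  set t := alg p / alg q with hT
  rw [rcomp_cmp hnc, map_div₀, cmp_alg hnc, cmp_alg hnc]
  have lin : ∀ α β : ℂ, (Polynomial.aeval t) (C α * X + C β) =
      alg (C α * p + C β * q) / alg q := by
    intro α β
    rw [map_add, map_mul, aeval_C, aeval_X, algMapC, aeval_C, algMapC, hT]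
    rw [map_add, map_mul, map_mul, algC, algC]
    rw [mul_div_assoc']
    rw [div_add' _ _ _ (alg_ne_zero hq)]
  rw [lin, lin, div_div_div_eq,
    mul_comm ((algebraMap (Polynomial ℂ) K) q) ((algebraMap (Polynomial ℂ) K) (C γ * p + C δ * q)),
    mul_div_mul_right _ _ (alg_ne_zero hq)]

/-- monomial-like polynomials -/
def ML (r : Polynomial ℂ) : Prop := ∃ (c : ℂ) (e : ℕ), c ≠ 0 ∧ r = C c * X ^ e

lemma ML.ne_zero {r : Polynomial ℂ} (h : ML r) : r ≠ 0 := by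
  obtain ⟨c, e, hc, rfl⟩ := h
  exact mul_ne_zero (by simpa using hc) (pow_ne_zero _ X_ne_zero)

lemma ML.mul {r s : Polynomial ℂ} (hr : ML r) (hs : ML s) : ML (r * s) := by
  obtain ⟨c, e, hc, rfl⟩ := hr
  obtain ⟨d, f, hd, rfl⟩ := hs
  exact ⟨c * d, e + f, mul_ne_zero hc hd, by rw [C_mul, pow_add]; ring⟩

lemma ML.one : ML (1 : Polynomial ℂ) := ⟨1, 0, one_ne_zero, by simp⟩

lemma ML.C {c : ℂ} (hc : c ≠ 0) : ML (Polynomial.C c) := ⟨c, 0, hc, by simp⟩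

lemma ML.pow {r : Polynomial ℂ} (hr : ML r) (n : ℕ) : ML (r ^ n) := by
  induction n with
  | zero => simpa using ML.one
  | succ k ih => rw [pow_succ]; exact ih.mul hr

lemma ML.prod {M : Multiset (Polynomial ℂ)} (h : ∀ x ∈ M, ML x) : ML M.prod :=
  Multiset.prod_induction _ M (fun _ _ => ML.mul) ML.one h

lemma ML.of_dvd_X_pow {r : Polynomial ℂ} {j : ℕ} (h : r ∣ X ^ j) (h0 : r ≠ 0) : ML r := by
  obtain ⟨i, _, hass⟩ := (dvd_prime_pow Polynomial.prime_X j).mp h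
  obtain ⟨u, hu⟩ := hass.symm
  obtain ⟨c, hc, hCc⟩ := Polynomial.isUnit_iff.mp u.isUnit
  exact ⟨c, i, hc.ne_zero, by rw [← hu, ← hCc]; ring⟩

lemma X_dvd_ML {c : ℂ} {e : ℕ} (hc : c ≠ 0) (h : (X : Polynomial ℂ) ∣ C c * X ^ e) :
    0 < e := by
  rcases Nat.eq_zero_or_pos e with he | he
  · subst he
    simp only [pow_zero, mul_one] at h
    obtain ⟨t, ht⟩ := h
    have := congrArg (Polynomial.eval 0) ht
    simp at this
    exact absurd this hc
  · exact he

lemma X_dvd_of_pos {c : ℂ} {e : ℕ} (he : 0 < e) : (X : Polynomial ℂ) ∣ C c * X ^ e :=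
  Dvd.dvd.mul_left (dvd_pow_self X he.ne') _

lemma X_not_dvd_C {c : ℂ} (hc : c ≠ 0) : ¬ (X : Polynomial ℂ) ∣ C c := by
  intro ⟨t, ht⟩
  have := congrArg (Polynomial.eval 0) ht
  simp at this
  exact hc this

/-- IsLaurent of a fraction with monomial denominator -/
lemma isLaurent_of_ML (N D : Polynomial ℂ) (hD : ML D) : IsLaurent (alg N / alg D) := by
  obtain ⟨c, e, hc, rfl⟩ := hD
  refine ⟨Polynomial.C c⁻¹ * N, e, ?_⟩
  have hX : (RatFunc.X : RatFunc ℂ) ^ e ≠ 0 := pow_ne_zero _ RatFunc.X_ne_zero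
  have hcc : RatFunc.C c ≠ 0 := by
    rw [← algC]; exact alg_ne_zero (by simpa using hc)
  rw [map_mul, map_pow, algC, RatFunc.algebraMap_X, map_mul, algC]
  rw [div_eq_div_iff (mul_ne_zero hcc hX) hX]
  have h1 : RatFunc.C c⁻¹ * RatFunc.C c = 1 := by
    rw [← algC, ← algC, ← map_mul, ← C_mul, inv_mul_cancel₀ hc, C_1, map_one]
  linear_combination (-(algebraMap (Polynomial ℂ) (RatFunc ℂ) N * RatFunc.X ^ e)) * h1

lemma coprime_sub_C_mul {p q : Polynomial ℂ} (h : IsCoprime p q) (w : ℂ) :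
    IsCoprime (p - C w * q) q := by
  obtain ⟨u, v, huv⟩ := h
  exact ⟨u, v + u * C w, by linear_combination huv⟩

lemma coprime_lin_lin {p q : Polynomial ℂ} (h : IsCoprime p q) {z w : ℂ} (hzw : z ≠ w) :
    IsCoprime (p - C z * q) (p - C w * q) := by
  obtain ⟨u, v, huv⟩ := h
  have hC : Polynomial.C ((w - z)⁻¹) * (Polynomial.C w - Polynomial.C z) = 1 := by
    rw [← C_sub, ← C_mul, inv_mul_cancel₀ (sub_ne_zero.mpr (Ne.symm hzw)), C_1]
  refine ⟨(u * C w + v) * C ((w - z)⁻¹), -((u * C z + v) * C ((w - z)⁻¹)), ?_⟩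
  linear_combination (C ((w - z)⁻¹) * (C w - C z)) * huv + hC

lemma C_ne_zero' {c : ℂ} (hc : c ≠ 0) : (C c : Polynomial ℂ) ≠ 0 := by
  rw [Ne, C_eq_zero]; exact hc

lemma RC_ne_zero {c : ℂ} (hc : c ≠ 0) : (RatFunc.C c : RatFunc ℂ) ≠ 0 := by
  rw [← algC]; exact alg_ne_zero (C_ne_zero' hc)

lemma RC_mul_inv {c : ℂ} (hc : c ≠ 0) : RatFunc.C c⁻¹ * RatFunc.C c = 1 := by
  rw [← algC, ← algC, ← map_mul, ← C_mul, inv_mul_cancel₀ hc, C_1, map_one]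

lemma lin_coeffs {a b a' b' : ℂ} (h : C a * X + C b = C a' * X + C b') : a = a' ∧ b = b' := by
  have h1 := congrArg (fun r => Polynomial.coeff r 1) h
  have h0 := congrArg (fun r => Polynomial.coeff r 0) h
  simp only [coeff_add, coeff_C_mul, coeff_X_one, coeff_X_zero, mul_one, mul_zero, coeff_C,
    if_true, if_false, one_ne_zero, add_zero, zero_add] at h1 h0
  exact ⟨h1, h0⟩

lemma lin_ne_zero {a b : ℂ} (h : ¬(a = 0 ∧ b = 0)) : (C a * X + C b : Polynomial ℂ) ≠ 0 := by
  intro h0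
  have := lin_coeffs (a' := 0) (b' := 0) (by rw [h0]; simp)
  exact h this

lemma poly_of_C_denom (N : Polynomial ℂ) {c : ℂ} (hc : c ≠ 0) :
    ∃ P : Polynomial ℂ, alg N / alg (C c) = alg P := by
  refine ⟨Polynomial.C c⁻¹ * N, ?_⟩
  rw [map_mul, algC, algC, div_eq_iff (RC_ne_zero hc), mul_comm (RatFunc.C c⁻¹), mul_assoc,
    RC_mul_inv hc, mul_one]

/-- a linear fractional with nonzero determinant is nonconstant -/
lemma mob_nc {a b c d : ℂ} (hdet : a * d - b * c ≠ 0) :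
    ∀ k : ℂ, alg (C a * X + C b) / alg (C c * X + C d) ≠ RatFunc.C k := by
  intro k hk
  have hv : (C c * X + C d : Polynomial ℂ) ≠ 0 := by
    refine lin_ne_zero ?_
    rintro ⟨rfl, rfl⟩
    simp at hdet
  rw [div_eq_iff (alg_ne_zero hv), ← algC, ← map_mul] at hk
  have heq := RatFunc.algebraMap_injective ℂ hk
  have h2 : C k * (C c * X + C d) = C (k * c) * X + C (k * d) := by
    simp only [C_mul]; ring
  rw [h2] at heq
  obtain ⟨h1, h0⟩ := lin_coeffs heq
  apply hdet
  rw [h1, h0]; ring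

lemma mob_pair {a b c d : ℂ} (hdet : a * d - b * c ≠ 0) :
    IsMobius (alg (C a * X + C b) / alg (C c * X + C d)) ∧
    rcomp (alg (C a * X + C b) / alg (C c * X + C d))
      (alg (C d * X + C (-b)) / alg (C (-c) * X + C a)) = RatFunc.X ∧
    rcomp (alg (C d * X + C (-b)) / alg (C (-c) * X + C a))
      (alg (C a * X + C b) / alg (C c * X + C d)) = RatFunc.X := by
  have hdet' : d * a - (-b) * (-c) ≠ 0 := by
    intro h; apply hdet; linear_combination h
  have hv1 : (C c * X + C d : Polynomial ℂ) ≠ 0 := by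
    refine lin_ne_zero ?_; rintro ⟨rfl, rfl⟩; simp at hdet
  have hv2 : (C (-c) * X + C a : Polynomial ℂ) ≠ 0 := by
    refine lin_ne_zero ?_
    rintro ⟨hc0, rfl⟩
    rw [neg_eq_zero] at hc0
    subst hc0
    simp at hdet
  have hCdet : RatFunc.C (a * d - b * c) ≠ 0 := RC_ne_zero hdet
  refine ⟨⟨a, b, c, d, hdet, ?_⟩, ?_, ?_⟩
  · rw [map_add, map_mul, algC, algC, RatFunc.algebraMap_X, map_add, map_mul, algC, algC,
      RatFunc.algebraMap_X]
  · rw [rcomp_lin a b c d _ _ hv2 (mob_nc hdet')]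
    have e1 : C a * (C d * X + C (-b)) + C b * (C (-c) * X + C a) =
        C (a * d - b * c) * X := by
      simp only [C_mul, C_sub, C_neg]; ring
    have e2 : C c * (C d * X + C (-b)) + C d * (C (-c) * X + C a) =
        C (a * d - b * c) := by
      simp only [C_mul, C_sub, C_neg]; ring
    rw [e1, e2, map_mul, algC, RatFunc.algebraMap_X, mul_comm, mul_div_assoc,
      div_self hCdet, mul_one]
  · rw [rcomp_lin d (-b) (-c) a _ _ hv1 (mob_nc hdet)]
    have e1 : C d * (C a * X + C b) + C (-b) * (C c * X + C d) =
        C (a * d - b * c) * X := by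
      simp only [C_mul, C_sub, C_neg]; ring
    have e2 : C (-c) * (C a * X + C b) + C a * (C c * X + C d) =
        C (a * d - b * c) := by
      simp only [C_mul, C_sub, C_neg]; ring
    rw [e1, e2, map_mul, algC, RatFunc.algebraMap_X, mul_comm, mul_div_assoc,
      div_self hCdet, mul_one]

lemma frac_eq {x : K} {N D : Polynomial ℂ} (hD : D ≠ 0) (hx : x = alg N / alg D) :
    x.num * D = N * x.denom := by
  have h1 : alg x.num / alg x.denom = alg N / alg D := by rw [RatFunc.num_div_denom, hx]
  rw [div_eq_div_iff (alg_ne_zero (RatFunc.denom_ne_zero x)) (alg_ne_zero hD)] at h1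
  exact RatFunc.algebraMap_injective ℂ (by rw [map_mul, map_mul]; exact h1)

lemma denom_of_isLaurent {x : K} (hx : IsLaurent x) : ∃ j : ℕ, x.denom = X ^ j := by
  refine ?_
  obtain ⟨P, k, hPk⟩ := hx
  have heq : x.num * X ^ k = P * x.denom :=
    frac_eq (pow_ne_zero k X_ne_zero)
      (by rw [hPk, map_pow, RatFunc.algebraMap_X])
  have hdvd : x.denom ∣ x.num * X ^ k := ⟨P, by linear_combination heq⟩
  have hdX : x.denom ∣ X ^ k :=
    (RatFunc.isCoprime_num_denom x).symm.dvd_of_dvd_mul_left hdvd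
  obtain ⟨c, j, hc, hcj⟩ := ML.of_dvd_X_pow hdX (RatFunc.denom_ne_zero x)
  have hm := RatFunc.monic_denom x
  rw [hcj] at hm ⊢
  have : c = 1 := by
    have := hm.leadingCoeff
    rwa [leadingCoeff_mul, leadingCoeff_C, (monic_X_pow j).leadingCoeff, mul_one] at this
  rw [this, C_1, one_mul]
  exact ⟨j, rfl⟩

lemma rcomp_const_right (g : K) (c : ℂ) : ∃ k : ℂ, rcomp g (RatFunc.C c) = RatFunc.C k := by
  refine ⟨g.num.eval c / g.denom.eval c, ?_⟩
  rw [rcomp, RatFunc.eval, ← algMapC, Polynomial.eval₂_at_apply, Polynomial.eval₂_at_apply,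
    ← map_div₀, algMapC]

lemma rcomp_const_left (c : ℂ) (t : K) : rcomp (RatFunc.C c) t = RatFunc.C c := by
  rw [rcomp, RatFunc.eval_C, algMapC]

lemma alg_cancel {A B C' : Polynomial ℂ} (hB : B ≠ 0) :
    alg (A * B) / alg (C' * B) = alg A / alg C' := by
  rw [map_mul, map_mul, mul_div_mul_right _ _ (alg_ne_zero hB)]

lemma rcomp_repr_le (g : K) (hg : g ≠ 0) (u v : Polynomial ℂ) (hv : v ≠ 0)
    (hnc : ∀ c : ℂ, alg u / alg v ≠ RatFunc.C c)
    (hle : g.num.roots.card ≤ g.denom.roots.card) :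
    rcomp g (alg u / alg v) =
      alg (C g.num.leadingCoeff * (g.num.roots.map fun z => u - C z * v).prod
          * v ^ (g.denom.roots.card - g.num.roots.card)) /
      alg (C g.denom.leadingCoeff * (g.denom.roots.map fun z => u - C z * v).prod) := by
  rw [rcomp_repr g hg u v hv hnc]
  have hNsplit : C g.num.leadingCoeff * (g.num.roots.map fun z => u - C z * v).prod
      * v ^ g.denom.roots.card =
      (C g.num.leadingCoeff * (g.num.roots.map fun z => u - C z * v).prod
        * v ^ (g.denom.roots.card - g.num.roots.card)) * v ^ g.num.roots.card := by
    conv_lhs => rw [← Nat.sub_add_cancel hle, pow_add]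
    ring
  rw [hNsplit, alg_cancel (pow_ne_zero _ hv)]

lemma rcomp_repr_ge (g : K) (hg : g ≠ 0) (u v : Polynomial ℂ) (hv : v ≠ 0)
    (hnc : ∀ c : ℂ, alg u / alg v ≠ RatFunc.C c)
    (hge : g.denom.roots.card ≤ g.num.roots.card) :
    rcomp g (alg u / alg v) =
      alg (C g.num.leadingCoeff * (g.num.roots.map fun z => u - C z * v).prod) /
      alg (C g.denom.leadingCoeff * (g.denom.roots.map fun z => u - C z * v).prod
          * v ^ (g.num.roots.card - g.denom.roots.card)) := by
  rw [rcomp_repr g hg u v hv hnc]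
  have hDsplit : C g.denom.leadingCoeff * (g.denom.roots.map fun z => u - C z * v).prod
      * v ^ g.num.roots.card =
      (C g.denom.leadingCoeff * (g.denom.roots.map fun z => u - C z * v).prod
        * v ^ (g.num.roots.card - g.denom.roots.card)) * v ^ g.denom.roots.card := by
    conv_lhs => rw [← Nat.sub_add_cancel hge, pow_add]
    ring
  rw [hDsplit, alg_cancel (pow_ne_zero _ hv)]

lemma isCoprime_C_right {r : Polynomial ℂ} {c : ℂ} (hc : c ≠ 0) : IsCoprime r (C c) :=
  ⟨0, Polynomial.C c⁻¹, by rw [zero_mul, zero_add, ← C_mul, inv_mul_cancel₀ hc, C_1]⟩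

lemma coprime_q_lin {p q : Polynomial ℂ} (h : IsCoprime p q) (w : ℂ) :
    IsCoprime q (p - C w * q) := by
  obtain ⟨u, v, huv⟩ := h
  exact ⟨v + u * C w, u, by linear_combination huv⟩

lemma isCoprime_msprod_right {x : Polynomial ℂ} {M : Multiset (Polynomial ℂ)}
    (h : ∀ y ∈ M, IsCoprime x y) : IsCoprime x M.prod :=
  Multiset.prod_induction _ M (fun _ _ hs ht => hs.mul_right ht) isCoprime_one_right h

lemma monic_dvd_X_pow {r : Polynomial ℂ} {j : ℕ} (hm : r.Monic) (h : r ∣ X ^ j) :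
    ∃ m : ℕ, r = X ^ m := by
  obtain ⟨c, i, hc, hci⟩ := ML.of_dvd_X_pow h hm.ne_zero
  refine ⟨i, ?_⟩
  rw [hci] at hm ⊢
  have : c = 1 := by
    have := hm.leadingCoeff
    rwa [leadingCoeff_mul, leadingCoeff_C, (monic_X_pow i).leadingCoeff, mul_one] at this
  rw [this, C_1, one_mul]

lemma X_nc : ∀ c : ℂ, (RatFunc.X : RatFunc ℂ) ≠ RatFunc.C c := by
  intro c hc
  rw [← RatFunc.algebraMap_X, ← algC] at hc
  exact Polynomial.X_ne_C c (RatFunc.algebraMap_injective ℂ hc)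

lemma rcomp_X_right (g : K) : rcomp g RatFunc.X = g := by
  rw [rcomp_cmp X_nc, cmp_apply]
  have key : ∀ r : Polynomial ℂ, (Polynomial.aeval (RatFunc.X : RatFunc ℂ)) r = alg r := by
    intro r
    rw [← RatFunc.algebraMap_X, aeval_algebraMap_apply, aeval_X_left_apply]
  rw [key, key, RatFunc.num_div_denom]

end LD

open LD in
theorem laurent_decomposition_types (f g h : RatFunc ℂ)
    (hf : IsLaurent f) (hfc : ¬ ∃ c : ℂ, f = RatFunc.C c)
    (hgh : f = rcomp g h) :
    ∃ μ ν : RatFunc ℂ, IsMobius μ ∧ rcomp μ ν = RatFunc.X ∧ rcomp ν μ = RatFunc.X ∧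
      (((∃ p : Polynomial ℂ, rcomp g μ = algebraMap (Polynomial ℂ) (RatFunc ℂ) p) ∧
          IsLaurent (rcomp ν h)) ∨
       (IsLaurent (rcomp g μ) ∧ ∃ n : ℕ, 0 < n ∧ rcomp ν h = RatFunc.X ^ n)) := by
  classical
  set p := h.num with hpdef
  set q := h.denom with hqdef
  set a := g.num with hadef
  set b := g.denom with hbdef
  -- nonconstancy facts
  have hnch : ∀ c : ℂ, h ≠ RatFunc.C c := by
    intro c hc
    obtain ⟨k, hk⟩ := rcomp_const_right g c
    exact hfc ⟨k, by rw [hgh, hc, hk]⟩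
  have hncg : ∀ c : ℂ, g ≠ RatFunc.C c := by
    intro c hc
    exact hfc ⟨c, by rw [hgh, hc, rcomp_const_left]⟩
  have hg0 : g ≠ 0 := fun h0 => hncg 0 (by rw [h0, map_zero])
  have hh0 : h ≠ 0 := fun h0 => hnch 0 (by rw [h0, map_zero])
  have hq0 : q ≠ 0 := RatFunc.denom_ne_zero h
  have ha0 : a ≠ 0 := RatFunc.num_ne_zero hg0
  have hb0 : b ≠ 0 := RatFunc.denom_ne_zero g
  have hcoph : IsCoprime p q := RatFunc.isCoprime_num_denom h
  have hcopg : IsCoprime a b := RatFunc.isCoprime_num_denom g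
  have hpq : algebraMap (Polynomial ℂ) (RatFunc ℂ) p / algebraMap (Polynomial ℂ) (RatFunc ℂ) q = h :=
    RatFunc.num_div_denom h
  have hnchpq : ∀ c : ℂ, algebraMap (Polynomial ℂ) (RatFunc ℂ) p / algebraMap (Polynomial ℂ) (RatFunc ℂ) q
      ≠ RatFunc.C c := by rw [hpq]; exact hnch
  have hblc : b.leadingCoeff = 1 := (RatFunc.monic_denom g).leadingCoeff
  -- the main polynomial identity
  set PA := (a.roots.map fun z => p - C z * q).prod with hPAdef
  set PB := (b.roots.map fun z => p - C z * q).prod with hPBdef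
  set ca := a.roots.card with hcadef
  set cb := b.roots.card with hcbdef
  obtain ⟨j, hfd⟩ := denom_of_isLaurent hf
  have hfrep : f = algebraMap (Polynomial ℂ) (RatFunc ℂ) (C a.leadingCoeff * PA * q ^ cb) /
      algebraMap (Polynomial ℂ) (RatFunc ℂ) (C b.leadingCoeff * PB * q ^ ca) := by
    rw [hgh, ← hpq, rcomp_repr g hg0 p q hq0 hnchpq]
  -- each linear pole factor is nonzero
  have hLne : ∀ w : ℂ, p - C w * q ≠ 0 := by
    intro w h0
    apply hnch w
    rw [← hpq, ← sub_eq_zero, sub_C_div hq0, h0, map_zero, zero_div]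
  have hPBne : PB ≠ 0 := by
    rw [hPBdef]
    refine Multiset.prod_ne_zero ?_
    intro h0
    obtain ⟨z, _, hz⟩ := Multiset.mem_map.mp h0
    exact hLne z hz
  have hDne : C b.leadingCoeff * PB * q ^ ca ≠ 0 :=
    mul_ne_zero (mul_ne_zero (C_ne_zero' (by rw [hblc]; exact one_ne_zero)) hPBne)
      (pow_ne_zero _ hq0)
  have E : f.num * (C b.leadingCoeff * PB * q ^ ca) =
      (C a.leadingCoeff * PA * q ^ cb) * X ^ j := by
    have := frac_eq hDne hfrep
    rw [hfd] at this
    linear_combination this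
  -- coprimality of pole factors with the numerator side
  have hlca : a.leadingCoeff ≠ 0 := leadingCoeff_ne_zero.mpr ha0
  have hcopPA : ∀ w ∈ b.roots, IsCoprime (p - C w * q) PA := by
    intro w hw
    refine isCoprime_msprod_right ?_
    intro y hy
    obtain ⟨z, hz, rfl⟩ := Multiset.mem_map.mp hy
    have hzw : z ≠ w := by
      rintro rfl
      have hda : (X - C z) ∣ a := dvd_iff_isRoot.mpr (isRoot_of_mem_roots hz)
      have hdb : (X - C z) ∣ b := dvd_iff_isRoot.mpr (isRoot_of_mem_roots hw)
      exact Polynomial.not_isUnit_X_sub_C z (hcopg.isUnit_of_dvd' hda hdb)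
    exact coprime_lin_lin hcoph (Ne.symm hzw)
  -- pole factors divide X^j
  have hfac : ∀ w ∈ b.roots, ∃ (c : ℂ) (e : ℕ), c ≠ 0 ∧ p - C w * q = C c * X ^ e := by
    intro w hw
    have hdvdPB : (p - C w * q) ∣ PB :=
      Multiset.dvd_prod (Multiset.mem_map_of_mem _ hw)
    have hdvd : (p - C w * q) ∣ (C a.leadingCoeff * PA * q ^ cb) * X ^ j := by
      rw [← E]
      exact ((hdvdPB.mul_left (C b.leadingCoeff)).mul_right (q ^ ca)).mul_left f.num
    have hcop : IsCoprime (p - C w * q) (C a.leadingCoeff * PA * q ^ cb) :=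
      ((isCoprime_C_right hlca).mul_right (hcopPA w hw)).mul_right
        ((coprime_sub_C_mul hcoph w).pow_right)
    exact ML.of_dvd_X_pow (hcop.dvd_of_dvd_mul_left hdvd) (hLne w)
  -- if deg numerator exceeds denominator, q is a power of X
  have hqX : cb < ca → ∃ m : ℕ, q = X ^ m := by
    intro hlt
    have hpow : q ^ ca = q ^ (ca - cb) * q ^ cb := by
      rw [← pow_add, Nat.sub_add_cancel hlt.le]
    have E1 : (f.num * (C b.leadingCoeff * PB) * q ^ (ca - cb)) * q ^ cb =
        ((C a.leadingCoeff * PA) * X ^ j) * q ^ cb := by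
      linear_combination E - f.num * (C b.leadingCoeff * PB) * hpow
    have E2 := mul_right_cancel₀ (pow_ne_zero cb hq0) E1
    have hdvd : q ∣ (C a.leadingCoeff * PA) * X ^ j := by
      rw [← E2]
      exact ((dvd_pow_self q (Nat.sub_ne_zero_of_lt hlt)).mul_left _)
    have hcop : IsCoprime q (C a.leadingCoeff * PA) :=
      (isCoprime_C_right hlca).mul_right (isCoprime_msprod_right ?_)
    · exact monic_dvd_X_pow (RatFunc.monic_denom h) (hcop.dvd_of_dvd_mul_left hdvd)
    · intro y hy
      obtain ⟨z, _, rfl⟩ := Multiset.mem_map.mp hy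
      exact coprime_q_lin hcoph z
  -- exclusion facts
  have keyX : ∀ w : ℂ, (X : Polynomial ℂ) ∣ (p - C w * q) → (X : Polynomial ℂ) ∣ q → False := by
    intro w h1 h2
    have hp : (X : Polynomial ℂ) ∣ p := by
      have hrw : p = (p - C w * q) + C w * q := by ring
      rw [hrw]
      exact dvd_add h1 (h2.mul_left _)
    exact Polynomial.not_isUnit_X (hcoph.isUnit_of_dvd' hp h2)
  have keyXX : ∀ w₁ w₂ : ℂ, w₁ ≠ w₂ → (X : Polynomial ℂ) ∣ (p - C w₁ * q) →
      (X : Polynomial ℂ) ∣ (p - C w₂ * q) → False := by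
    intro w₁ w₂ hne h1 h2
    have hq' : (X : Polynomial ℂ) ∣ C (w₁ - w₂) * q := by
      have hrw : C (w₁ - w₂) * q = (p - C w₂ * q) - (p - C w₁ * q) := by rw [C_sub]; ring
      rw [hrw]; exact dvd_sub h2 h1
    rcases Polynomial.prime_X.dvd_mul.mp hq' with hd | hd
    · exact X_not_dvd_C (sub_ne_zero.mpr hne) hd
    · exact keyX w₁ h1 hd
  have keyC : ∀ w c : ℂ, p - C w * q = C c → q.natDegree = 0 → False := by
    intro w c hL hdeg
    have hq1 : q = 1 := (RatFunc.monic_denom h).natDegree_eq_zero.mp hdeg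
    rw [hq1] at hL
    apply hnch (c + w)
    rw [← hpq, hq1, map_one, div_one]
    have hpc : p = C (c + w) := by rw [C_add]; linear_combination hL
    rw [hpc, algC]
  have keyCC : ∀ w₁ w₂ c₁ c₂ : ℂ, w₁ ≠ w₂ → p - C w₁ * q = C c₁ →
      p - C w₂ * q = C c₂ → False := by
    intro w₁ w₂ c₁ c₂ hne h1 h2
    have h3 : C (w₂ - w₁) * q = C (c₁ - c₂) := by rw [C_sub, C_sub]; linear_combination h1 - h2
    have hdeg : q.natDegree = 0 := by
      have h4 : q = C ((w₂ - w₁)⁻¹) * C (c₁ - c₂) := by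
        calc q = (C ((w₂ - w₁)⁻¹) * C (w₂ - w₁)) * q := by
              rw [← C_mul, inv_mul_cancel₀ (sub_ne_zero.mpr (Ne.symm hne)), C_1, one_mul]
          _ = C ((w₂ - w₁)⁻¹) * (C (w₂ - w₁) * q) := by ring
          _ = C ((w₂ - w₁)⁻¹) * C (c₁ - c₂) := by rw [h3]
      rw [h4, ← C_mul]; exact natDegree_C _
    exact keyC w₁ c₁ h1 hdeg
  -- case analysis on the poles of g
  by_cases hroots : b.roots = 0
  · -- no finite poles : g is a polynomial, take μ = ν = X
    have hcb0 : cb = 0 := by rw [hcbdef, hroots]; rfl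
    have hbnat : b.natDegree = 0 := by
      have hsp := Polynomial.splits_iff_card_roots.mp (IsAlgClosed.splits b)
      rw [← hsp, ← hcbdef, hcb0]
    have hb1 : b = 1 := (RatFunc.monic_denom g).natDegree_eq_zero.mp hbnat
    have hca_pos : 0 < ca := by
      rcases Nat.eq_zero_or_pos ca with h0 | h0
      · exfalso
        have hanat : a.natDegree = 0 := by
          have hsp := Polynomial.splits_iff_card_roots.mp (IsAlgClosed.splits a)
          rw [← hsp, ← hcadef, h0]
        apply hncg (a.coeff 0)
        rw [← RatFunc.num_div_denom g, ← hadef, ← hbdef, hb1, map_one, div_one]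
        conv_lhs => rw [eq_C_of_natDegree_eq_zero hanat]
        rw [algC]
      · exact h0
    obtain ⟨m, hqm⟩ := hqX (by rw [hcb0]; exact hca_pos)
    obtain ⟨hmob, hc1, hc2⟩ := mob_pair (a := (1 : ℂ)) (b := 0) (c := 0) (d := 1) (by norm_num)
    have hXid : algebraMap (Polynomial ℂ) (RatFunc ℂ) (C (1 : ℂ) * X + C 0) /
        algebraMap (Polynomial ℂ) (RatFunc ℂ) (C (0 : ℂ) * X + C 1) = RatFunc.X := by
      rw [C_1, C_0, one_mul, add_zero, zero_mul, zero_add, map_one, div_one,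
        RatFunc.algebraMap_X]
    have hXid2 : algebraMap (Polynomial ℂ) (RatFunc ℂ) (C (1 : ℂ) * X + C (-0 : ℂ)) /
        algebraMap (Polynomial ℂ) (RatFunc ℂ) (C (-0 : ℂ) * X + C 1) = RatFunc.X := by
      rw [neg_zero, C_1, C_0, one_mul, add_zero, zero_mul, zero_add, map_one, div_one,
        RatFunc.algebraMap_X]
    rw [hXid] at hmob hc1 hc2
    rw [hXid2] at hc1 hc2
    refine ⟨RatFunc.X, RatFunc.X, hmob, hc1, hc2, Or.inl ⟨⟨a, ?_⟩, ?_⟩⟩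
    · rw [rcomp_X_right, ← RatFunc.num_div_denom g, ← hadef, ← hbdef, hb1, map_one, div_one]
    · rw [rcomp, RatFunc.eval_X]
      exact ⟨p, m, by rw [← hpq, hqm, map_pow, RatFunc.algebraMap_X]⟩
  · -- b has a root w
    obtain ⟨w, hw⟩ := Multiset.exists_mem_of_ne_zero hroots
    obtain ⟨c₁, e₁, hc₁, hL₁⟩ := hfac w hw
    by_cases hsingle : ∀ z ∈ b.roots, z = w
    · -- single finite pole w
      rcases le_or_gt ca cb with hle | hlt
      · -- no pole at infinity : g ∘ μ is a polynomial
        obtain ⟨hmob, hcμν, hcνμ⟩ := mob_pair (a := w) (b := 1) (c := 1) (d := 0)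
          (by norm_num)
        refine ⟨_, _, hmob, hcμν, hcνμ, Or.inl ⟨?_, ?_⟩⟩
        · -- G is a polynomial
          have hv : (C (1 : ℂ) * X + C 0 : Polynomial ℂ) ≠ 0 := lin_ne_zero (by simp)
          rw [rcomp_repr_le g hg0 _ _ hv (mob_nc (by norm_num)) hle]
          simp only [← hadef, ← hbdef, ← hcadef, ← hcbdef]
          have hPB1 : (b.roots.map fun z =>
              (C w * X + C 1) - C z * (C (1 : ℂ) * X + C 0)).prod = 1 := by
            apply Multiset.prod_eq_one
            intro x hx
            obtain ⟨z, hz, rfl⟩ := Multiset.mem_map.mp hx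
            rw [hsingle z hz, C_0, C_1]
            ring
          rw [hPB1, hblc, C_1, mul_one, map_one, div_one]
          exact ⟨_, rfl⟩
        · -- H is Laurent
          rw [← hpq, rcomp_lin 0 (-1) (-1) w p q hq0 hnchpq]
          have hden : C (-1 : ℂ) * p + C w * q = C (-c₁) * X ^ e₁ := by
            rw [C_neg, C_neg, C_1]
            linear_combination -hL₁
          rw [hden]
          exact isLaurent_of_ML _ _ ⟨-c₁, e₁, neg_ne_zero.mpr hc₁, rfl⟩
      · -- poles w and ∞
        obtain ⟨m, hqm⟩ := hqX hlt
        have hdich : (e₁ = 0 ∧ 0 < m) ∨ (0 < e₁ ∧ m = 0) := by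
          rcases Nat.eq_zero_or_pos e₁ with h1 | h1 <;> rcases Nat.eq_zero_or_pos m with h2 | h2
          · exact (keyC w c₁
              (by rw [h1, pow_zero, mul_one] at hL₁; exact hL₁)
              (by rw [hqm, h2, pow_zero, natDegree_one])).elim
          · exact Or.inl ⟨h1, h2⟩
          · exact Or.inr ⟨h1, h2⟩
          · exact (keyX w (by rw [hL₁]; exact X_dvd_of_pos h1)
              (by rw [hqm]; exact dvd_pow_self X h2.ne')).elim
        rcases hdich with ⟨h1, h2⟩ | ⟨h1, h2⟩
        · -- q = X^m with m > 0, p - w q constant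
          rw [h1, pow_zero, mul_one] at hL₁
          have hdet : (-w) * 0 - (-c₁) * (-1) ≠ 0 := by simpa using hc₁
          obtain ⟨hmob, hcμν, hcνμ⟩ := mob_pair hdet
          refine ⟨_, _, hmob, hcμν, hcνμ, Or.inr ⟨?_, m, h2, ?_⟩⟩
          · -- G Laurent
            have hv : (C (-1 : ℂ) * X + C 0 : Polynomial ℂ) ≠ 0 := lin_ne_zero (by simp)
            rw [rcomp_repr_ge g hg0 _ _ hv (mob_nc hdet) hlt.le]
            simp only [← hadef, ← hbdef, ← hcadef, ← hcbdef]
            apply isLaurent_of_ML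
            refine (ML.mul (ML.C (by rw [hblc]; exact one_ne_zero)) (ML.prod ?_)).mul
              (ML.pow ⟨-1, 1, by norm_num, by rw [C_0, add_zero, pow_one]⟩ _)
            intro x hx
            obtain ⟨z, hz, rfl⟩ := Multiset.mem_map.mp hx
            rw [hsingle z hz,
              show (C (-w) * X + C (-c₁)) - C w * (C (-1 : ℂ) * X + C 0) = C (-c₁) by
                rw [C_neg, C_neg, C_neg, C_0, C_1]; ring]
            exact ML.C (neg_ne_zero.mpr hc₁)
          · -- H = X^m
            rw [← hpq, rcomp_lin 0 (-(-c₁)) (-(-1)) (-w) p q hq0 hnchpq]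
            have hnum : C (0 : ℂ) * p + C (-(-c₁)) * q = C c₁ * X ^ m := by
              rw [hqm, C_0, neg_neg]; ring
            have hden : C (-(-1) : ℂ) * p + C (-w) * q = C c₁ := by
              rw [neg_neg, C_1, C_neg]
              linear_combination hL₁
            rw [hnum, hden, map_mul, algC, map_pow, RatFunc.algebraMap_X, mul_comm,
              mul_div_assoc, div_self (RC_ne_zero hc₁), mul_one]
        · -- q = 1, p - w q = c₁ X^{e₁} with e₁ > 0
          have hq1 : q = 1 := by rw [hqm, h2, pow_zero]
          rw [hq1] at hL₁
          have hdet : (1 : ℂ) * c₁⁻¹ - (w * c₁⁻¹) * 0 ≠ 0 := by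
            simpa using inv_ne_zero hc₁
          obtain ⟨hmob, hcμν, hcνμ⟩ := mob_pair hdet
          refine ⟨_, _, hmob, hcμν, hcνμ, Or.inr ⟨?_, e₁, h1, ?_⟩⟩
          · -- G Laurent
            have hv : (C (0 : ℂ) * X + C c₁⁻¹ : Polynomial ℂ) ≠ 0 :=
              lin_ne_zero (by simp [inv_eq_zero, hc₁])
            rw [rcomp_repr_ge g hg0 _ _ hv (mob_nc hdet) hlt.le]
            simp only [← hadef, ← hbdef, ← hcadef, ← hcbdef]
            apply isLaurent_of_ML
            refine (ML.mul (ML.C (by rw [hblc]; exact one_ne_zero)) (ML.prod ?_)).mul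
              (ML.pow ⟨c₁⁻¹, 0, inv_ne_zero hc₁, by
                rw [C_0, zero_mul, zero_add, pow_zero, mul_one]⟩ _)
            intro x hx
            obtain ⟨z, hz, rfl⟩ := Multiset.mem_map.mp hx
            rw [hsingle z hz,
              show (C (1 : ℂ) * X + C (w * c₁⁻¹)) - C w * (C (0 : ℂ) * X + C c₁⁻¹)
                  = C 1 * X ^ 1 by
                rw [C_1, C_0, C_mul, pow_one]; ring]
            exact ⟨1, 1, one_ne_zero, rfl⟩
          · -- H = X^{e₁}
            rw [← hpq, rcomp_lin c₁⁻¹ (-(w * c₁⁻¹)) (-0) 1 p q hq0 hnchpq]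
            have hCinv : Polynomial.C c₁⁻¹ * Polynomial.C c₁ = 1 := by
              rw [← C_mul, inv_mul_cancel₀ hc₁, C_1]
            have hnum : C c₁⁻¹ * p + C (-(w * c₁⁻¹)) * q = X ^ e₁ := by
              rw [hq1, C_neg, C_mul]
              linear_combination Polynomial.C c₁⁻¹ * hL₁ + X ^ e₁ * hCinv
            have hden : C (-0 : ℂ) * p + C 1 * q = 1 := by
              rw [neg_zero, C_0, C_1, hq1, zero_mul, one_mul, zero_add]
            rw [hnum, hden, map_one, div_one, map_pow, RatFunc.algebraMap_X]
    · -- two distinct finite poles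
      push_neg at hsingle
      obtain ⟨w₂, hw₂, hne⟩ := hsingle
      obtain ⟨c₂, e₂, hc₂, hL₂⟩ := hfac w₂ hw₂
      have hne' : w ≠ w₂ := Ne.symm hne
      -- no pole at infinity
      have hca : ca ≤ cb := by
        by_contra hlt'
        obtain ⟨m, hqm⟩ := hqX (lt_of_not_ge hlt')
        have hqdeg0 : m = 0 → q.natDegree = 0 := by
          intro h0; rw [hqm, h0, pow_zero, natDegree_one]
        have hqdvd : 0 < m → (X : Polynomial ℂ) ∣ q := by
          intro h0; rw [hqm]; exact dvd_pow_self X h0.ne'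
        rcases Nat.eq_zero_or_pos e₁ with h1 | h1
        · rcases Nat.eq_zero_or_pos e₂ with h2 | h2
          · exact keyCC w w₂ c₁ c₂ hne'
              (by rw [h1, pow_zero, mul_one] at hL₁; exact hL₁)
              (by rw [h2, pow_zero, mul_one] at hL₂; exact hL₂)
          · rcases Nat.eq_zero_or_pos m with h3 | h3
            · exact keyC w c₁ (by rw [h1, pow_zero, mul_one] at hL₁; exact hL₁) (hqdeg0 h3)
            · exact keyX w₂ (by rw [hL₂]; exact X_dvd_of_pos h2) (hqdvd h3)
        · rcases Nat.eq_zero_or_pos e₂ with h2 | h2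
          · rcases Nat.eq_zero_or_pos m with h3 | h3
            · exact keyC w₂ c₂ (by rw [h2, pow_zero, mul_one] at hL₂; exact hL₂) (hqdeg0 h3)
            · exact keyX w (by rw [hL₁]; exact X_dvd_of_pos h1) (hqdvd h3)
          · exact keyXX w w₂ hne' (by rw [hL₁]; exact X_dvd_of_pos h1)
              (by rw [hL₂]; exact X_dvd_of_pos h2)
      -- every root of b is w or w₂
      have hall : ∀ z ∈ b.roots, z = w ∨ z = w₂ := by
        intro z hz
        by_contra hzz
        push_neg at hzz
        obtain ⟨hz1, hz2⟩ := hzz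
        obtain ⟨c₃, e₃, hc₃, hL₃⟩ := hfac z hz
        rcases Nat.eq_zero_or_pos e₁ with h1 | h1
        · rcases Nat.eq_zero_or_pos e₂ with h2 | h2
          · exact keyCC w w₂ c₁ c₂ hne'
              (by rw [h1, pow_zero, mul_one] at hL₁; exact hL₁)
              (by rw [h2, pow_zero, mul_one] at hL₂; exact hL₂)
          · rcases Nat.eq_zero_or_pos e₃ with h3 | h3
            · exact keyCC w z c₁ c₃ (Ne.symm hz1)
                (by rw [h1, pow_zero, mul_one] at hL₁; exact hL₁)
                (by rw [h3, pow_zero, mul_one] at hL₃; exact hL₃)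
            · exact keyXX w₂ z (Ne.symm hz2) (by rw [hL₂]; exact X_dvd_of_pos h2)
                (by rw [hL₃]; exact X_dvd_of_pos h3)
        · rcases Nat.eq_zero_or_pos e₂ with h2 | h2
          · rcases Nat.eq_zero_or_pos e₃ with h3 | h3
            · exact keyCC w₂ z c₂ c₃ (Ne.symm hz2)
                (by rw [h2, pow_zero, mul_one] at hL₂; exact hL₂)
                (by rw [h3, pow_zero, mul_one] at hL₃; exact hL₃)
            · exact keyXX w z (Ne.symm hz1) (by rw [hL₁]; exact X_dvd_of_pos h1)
                (by rw [hL₃]; exact X_dvd_of_pos h3)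
          · exact keyXX w w₂ hne' (by rw [hL₁]; exact X_dvd_of_pos h1)
              (by rw [hL₂]; exact X_dvd_of_pos h2)
      -- main construction, parametrized by which pole has the positive exponent
      have T3main : ∀ (w₁ w₂' c₁' c₂' : ℂ) (n : ℕ), c₁' ≠ 0 → c₂' ≠ 0 → w₁ ≠ w₂' → 0 < n →
          p - C w₁ * q = C c₁' * X ^ n → p - C w₂' * q = C c₂' →
          (∀ z ∈ b.roots, z = w₁ ∨ z = w₂') →
          ∃ μ ν : RatFunc ℂ, IsMobius μ ∧ rcomp μ ν = RatFunc.X ∧ rcomp ν μ = RatFunc.X ∧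
            (((∃ p : Polynomial ℂ,
                rcomp g μ = algebraMap (Polynomial ℂ) (RatFunc ℂ) p) ∧
                IsLaurent (rcomp ν h)) ∨
             (IsLaurent (rcomp g μ) ∧
                ∃ n : ℕ, 0 < n ∧ rcomp ν h = RatFunc.X ^ n)) := by
        intro w₁ w₂' c₁' c₂' n hc₁' hc₂' hww hn hLa hLb hall'
        have hcne : c₂' * c₁'⁻¹ ≠ 0 := mul_ne_zero hc₂' (inv_ne_zero hc₁')
        have hdet : (-w₂') * (c₂' * c₁'⁻¹) - (c₂' * c₁'⁻¹ * w₁) * (-1) ≠ 0 := by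
          have hrw : (-w₂') * (c₂' * c₁'⁻¹) - (c₂' * c₁'⁻¹ * w₁) * (-1)
              = c₂' * c₁'⁻¹ * (w₁ - w₂') := by ring
          rw [hrw]
          exact mul_ne_zero hcne (sub_ne_zero.mpr hww)
        obtain ⟨hmob, hcμν, hcνμ⟩ := mob_pair hdet
        refine ⟨_, _, hmob, hcμν, hcνμ, Or.inr ⟨?_, n, hn, ?_⟩⟩
        · -- G Laurent
          have hv : (C (-1 : ℂ) * X + C (c₂' * c₁'⁻¹) : Polynomial ℂ) ≠ 0 :=
            lin_ne_zero (by simp)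
          rw [rcomp_repr_le g hg0 _ _ hv (mob_nc hdet) hca]
          simp only [← hadef, ← hbdef, ← hcadef, ← hcbdef]
          apply isLaurent_of_ML
          refine ML.mul (ML.C (by rw [hblc]; exact one_ne_zero)) (ML.prod ?_)
          intro x hx
          obtain ⟨z, hz, rfl⟩ := Multiset.mem_map.mp hx
          rcases hall' z hz with hzw | hzw
          · rw [hzw, show (C (-w₂') * X + C (c₂' * c₁'⁻¹ * w₁))
                - C w₁ * (C (-1 : ℂ) * X + C (c₂' * c₁'⁻¹)) = C (w₁ - w₂') * X ^ 1 by
              simp only [C_sub, C_mul, C_neg, C_1]; ring]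
            exact ⟨w₁ - w₂', 1, sub_ne_zero.mpr hww, rfl⟩
          · rw [hzw, show (C (-w₂') * X + C (c₂' * c₁'⁻¹ * w₁))
                - C w₂' * (C (-1 : ℂ) * X + C (c₂' * c₁'⁻¹)) = C (c₂' * c₁'⁻¹ * (w₁ - w₂')) by
              simp only [C_sub, C_mul, C_neg, C_1]; ring]
            exact ML.C (mul_ne_zero hcne (sub_ne_zero.mpr hww))
        · -- H = X^n
          rw [← hpq, rcomp_lin (c₂' * c₁'⁻¹) (-(c₂' * c₁'⁻¹ * w₁)) (-(-1)) (-w₂') p q hq0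
            hnchpq]
          have hCC : Polynomial.C c₁'⁻¹ * Polynomial.C c₁' = 1 := by
            rw [← C_mul, inv_mul_cancel₀ hc₁', C_1]
          have hnum : C (c₂' * c₁'⁻¹) * p + C (-(c₂' * c₁'⁻¹ * w₁)) * q = C c₂' * X ^ n := by
            simp only [C_neg, C_mul]
            linear_combination (Polynomial.C c₂' * Polynomial.C c₁'⁻¹) * hLa
              + (X ^ n * Polynomial.C c₂') * hCC
          have hden : C (-(-1) : ℂ) * p + C (-w₂') * q = C c₂' := by
            rw [neg_neg, C_1, C_neg]
            linear_combination hLb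
          rw [hnum, hden, map_mul, algC, map_pow, RatFunc.algebraMap_X, mul_comm,
            mul_div_assoc, div_self (RC_ne_zero hc₂'), mul_one]
      -- dichotomy on which pole carries the X power
      rcases Nat.eq_zero_or_pos e₁ with h1 | h1
      · rcases Nat.eq_zero_or_pos e₂ with h2 | h2
        · exact (keyCC w w₂ c₁ c₂ hne'
            (by rw [h1, pow_zero, mul_one] at hL₁; exact hL₁)
            (by rw [h2, pow_zero, mul_one] at hL₂; exact hL₂)).elim
        · exact T3main w₂ w c₂ c₁ e₂ hc₂ hc₁ hne h2 hL₂
            (by rw [h1, pow_zero, mul_one] at hL₁; exact hL₁)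
            (fun z hz => (hall z hz).symm)
      · rcases Nat.eq_zero_or_pos e₂ with h2 | h2
        · exact T3main w w₂ c₁ c₂ e₁ hc₁ hc₂ hne' h1 hL₁
            (by rw [h2, pow_zero, mul_one] at hL₂; exact hL₂) hall
        · exact (keyXX w w₂ hne' (by rw [hL₁]; exact X_dvd_of_pos h1)
            (by rw [hL₂]; exact X_dvd_of_pos h2)).elim
end

section
/- Suppose g₁ ∘ x^n = g₂ ∘ x^m where g₁, g₂ are complex Laurent polynomials and n, m are positive integers. Then there exists a Laurent polynomial G such that g₁ = G ∘ x^{lcm(n,m)/n} and g₂ = G ∘ x^{lcm(n,m)/m}. -/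
open Polynomial

/-- The ring homomorphism on `RatFunc ℂ` given by substituting `X^n` for `X`. -/
lemma expand_hphi (n : ℕ) (hn : 0 < n) :
    nonZeroDivisors (Polynomial ℂ) ≤
      Submonoid.comap (Polynomial.expand ℂ n) (nonZeroDivisors (Polynomial ℂ)) := by
  intro p hp
  rw [Submonoid.mem_comap]
  rw [mem_nonZeroDivisors_iff_ne_zero] at hp ⊢
  intro h
  exact hp (Polynomial.expand_injective hn (by simpa using h))

noncomputable def expComp (n : ℕ) (hn : 0 < n) : RatFunc ℂ →+* RatFunc ℂ :=
  RatFunc.mapRingHom (Polynomial.expand ℂ n) (expand_hphi n hn)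

lemma expComp_apply (n : ℕ) (hn : 0 < n) (p q : Polynomial ℂ) :
    expComp n hn (algebraMap _ _ p / algebraMap _ _ q) =
      algebraMap _ _ (Polynomial.expand ℂ n p) / algebraMap _ _ (Polynomial.expand ℂ n q) :=
  RatFunc.map_apply_div (Polynomial.expand ℂ n) (expand_hphi n hn) p q

lemma algebraMap_expand (n : ℕ) (p : Polynomial ℂ) :
    algebraMap (Polynomial ℂ) (RatFunc ℂ) (Polynomial.expand ℂ n p) =
      Polynomial.eval₂ (algebraMap ℂ (RatFunc ℂ)) (RatFunc.X ^ n) p := by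
  have h1 : Polynomial.aeval ((X : Polynomial ℂ) ^ n) p = Polynomial.expand ℂ n p := by
    rw [Polynomial.aeval_def, Polynomial.algebraMap_eq, ← Polynomial.coe_expand]
  have h2 := Polynomial.aeval_algHom_apply
    (IsScalarTower.toAlgHom ℂ (Polynomial ℂ) (RatFunc ℂ)) ((X : Polynomial ℂ) ^ n) p
  rw [h1] at h2
  have h3 : (IsScalarTower.toAlgHom ℂ (Polynomial ℂ) (RatFunc ℂ)) ((X : Polynomial ℂ) ^ n)
      = RatFunc.X ^ n := by
    simp [map_pow]
  rw [h3] at h2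
  show (IsScalarTower.toAlgHom ℂ (Polynomial ℂ) (RatFunc ℂ)) (Polynomial.expand ℂ n p) = _
  rw [← h2, Polynomial.aeval_def]

lemma rcomp_X_pow (n : ℕ) (hn : 0 < n) (f : RatFunc ℂ) :
    rcomp f (RatFunc.X ^ n) = expComp n hn f := by
  conv_rhs => rw [← RatFunc.num_div_denom f]
  rw [expComp_apply, algebraMap_expand, algebraMap_expand]
  rfl

lemma expComp_comp (a b c : ℕ) (ha : 0 < a) (hb : 0 < b) (hc : 0 < c) (h : a * b = c)
    (f : RatFunc ℂ) : expComp a ha (expComp b hb f) = expComp c hc f := by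
  subst h
  conv_lhs => rw [← RatFunc.num_div_denom f]
  conv_rhs => rw [← RatFunc.num_div_denom f]
  rw [expComp_apply, expComp_apply, expComp_apply, Polynomial.expand_expand,
    Polynomial.expand_expand]

lemma expand_contract_of_dvd {L : ℕ} (hL : 0 < L) (s : Polynomial ℂ)
    (h : ∀ i, s.coeff i ≠ 0 → L ∣ i) :
    Polynomial.expand ℂ L (Polynomial.contract L s) = s := by
  ext i
  rw [Polynomial.coeff_expand hL]
  split_ifs with hdvd
  · rw [Polynomial.coeff_contract hL.ne', Nat.div_mul_cancel hdvd]
  · by_contra h0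
    exact hdvd (h i fun hc => h0 hc.symm)

theorem two_type2_decompositions (g₁ g₂ : RatFunc ℂ) (n m : ℕ)
    (hn : 0 < n) (hm : 0 < m) (hg₁ : IsLaurent g₁) (hg₂ : IsLaurent g₂)
    (heq : rcomp g₁ (RatFunc.X ^ n) = rcomp g₂ (RatFunc.X ^ m)) :
    ∃ G : RatFunc ℂ, IsLaurent G ∧
      g₁ = rcomp G (RatFunc.X ^ (Nat.lcm n m / n)) ∧
      g₂ = rcomp G (RatFunc.X ^ (Nat.lcm n m / m)) := by
  obtain ⟨p₁, k₁, rfl⟩ := hg₁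
  obtain ⟨p₂, k₂, rfl⟩ := hg₂
  set L := Nat.lcm n m with hLdef
  have hnL : n ∣ L := Nat.dvd_lcm_left n m
  have hmL : m ∣ L := Nat.dvd_lcm_right n m
  have hL : 0 < L := Nat.lcm_pos hn hm
  set n' := L / n with hn'def
  set m' := L / m with hm'def
  have hnn' : n * n' = L := Nat.mul_div_cancel' hnL
  have hmm' : m * m' = L := Nat.mul_div_cancel' hmL
  have hnleL : n ≤ L := Nat.le_of_dvd hL hnL
  have hmleL : m ≤ L := Nat.le_of_dvd hL hmL
  have hn' : 0 < n' := Nat.div_pos hnleL hn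
  have hm' : 0 < m' := Nat.div_pos hmleL hm
  have hXpow : ∀ k : ℕ, (RatFunc.X : RatFunc ℂ) ^ k = algebraMap (Polynomial ℂ) _ (X ^ k) := by
    intro k; rw [map_pow, RatFunc.algebraMap_X]
  have hexpX : ∀ a k : ℕ, Polynomial.expand ℂ a ((X : Polynomial ℂ) ^ k) = X ^ (a * k) := by
    intro a k; rw [map_pow, Polynomial.expand_X, ← pow_mul]
  have hXne : ∀ k : ℕ, algebraMap (Polynomial ℂ) (RatFunc ℂ) (X ^ k) ≠ 0 :=
    fun k => RatFunc.algebraMap_ne_zero (pow_ne_zero _ Polynomial.X_ne_zero)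
  rw [rcomp_X_pow n hn, rcomp_X_pow m hm, hXpow k₁, hXpow k₂, expComp_apply, expComp_apply,
    hexpX, hexpX, div_eq_div_iff (hXne _) (hXne _), ← map_mul, ← map_mul] at heq
  have hcross : Polynomial.expand ℂ n p₁ * X ^ (m * k₂) =
      Polynomial.expand ℂ m p₂ * X ^ (n * k₁) := RatFunc.algebraMap_injective ℂ heq
  set N := k₁ + k₂ with hNdef
  have hineq : n * k₁ + m * k₂ ≤ N * L := by
    calc n * k₁ + m * k₂ ≤ L * k₁ + L * k₂ :=
          Nat.add_le_add (Nat.mul_le_mul_right k₁ hnleL) (Nat.mul_le_mul_right k₂ hmleL)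
      _ = N * L := by rw [hNdef]; ring
  obtain ⟨a, ha⟩ : ∃ a, N * L = n * k₁ + m * k₂ + a := ⟨N * L - (n * k₁ + m * k₂), by omega⟩
  set s : Polynomial ℂ := Polynomial.expand ℂ n p₁ * X ^ (m * k₂ + a) with hs
  have hs2 : s = Polynomial.expand ℂ m p₂ * X ^ (n * k₁ + a) := by
    rw [hs, pow_add, ← mul_assoc, hcross, mul_assoc, ← pow_add]
  have hdvd1 : n ∣ m * k₂ + a := by
    have he : n * (N * n') = n * k₁ + (m * k₂ + a) := by
      rw [show n * (N * n') = N * (n * n') from by ring, hnn', ha]; ring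
    exact (Nat.dvd_add_right (dvd_mul_right n k₁)).mp ⟨N * n', he.symm⟩
  have hdvd2 : m ∣ n * k₁ + a := by
    have he : m * (N * m') = m * k₂ + (n * k₁ + a) := by
      rw [show m * (N * m') = N * (m * m') from by ring, hmm', ha]; ring
    exact (Nat.dvd_add_right (dvd_mul_right m k₂)).mp ⟨N * m', he.symm⟩
  have hsupp : ∀ i, s.coeff i ≠ 0 → L ∣ i := by
    intro i hi
    refine Nat.lcm_dvd ?_ ?_
    · rw [hs, Polynomial.coeff_mul_X_pow'] at hi
      by_cases hle : m * k₂ + a ≤ i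
      · rw [if_pos hle, Polynomial.coeff_expand hn] at hi
        by_cases hd : n ∣ i - (m * k₂ + a)
        · have : n ∣ (i - (m * k₂ + a)) + (m * k₂ + a) := dvd_add hd hdvd1
          rwa [Nat.sub_add_cancel hle] at this
        · rw [if_neg hd] at hi; exact absurd rfl hi
      · rw [if_neg hle] at hi; exact absurd rfl hi
    · rw [hs2, Polynomial.coeff_mul_X_pow'] at hi
      by_cases hle : n * k₁ + a ≤ i
      · rw [if_pos hle, Polynomial.coeff_expand hm] at hi
        by_cases hd : m ∣ i - (n * k₁ + a)
        · have : m ∣ (i - (n * k₁ + a)) + (n * k₁ + a) := dvd_add hd hdvd2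
          rwa [Nat.sub_add_cancel hle] at this
        · rw [if_neg hd] at hi; exact absurd rfl hi
      · rw [if_neg hle] at hi; exact absurd rfl hi
  set r := Polynomial.contract L s with hrdef
  have hr : Polynomial.expand ℂ L r = s := expand_contract_of_dvd hL s hsupp
  refine ⟨algebraMap (Polynomial ℂ) _ r / RatFunc.X ^ N, ⟨r, N, rfl⟩, ?_, ?_⟩
  · rw [rcomp_X_pow n' hn']
    refine (expComp n hn).injective ?_
    rw [expComp_comp n n' L hn hn' hL hnn', hXpow k₁, hXpow N, expComp_apply, expComp_apply,
      hexpX, hexpX, hr, div_eq_div_iff (hXne _) (hXne _), ← map_mul, ← map_mul]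
    congr 1
    rw [hs, mul_assoc, ← pow_add, show L * N = m * k₂ + a + n * k₁ from by
      rw [mul_comm L N, ha]; ring]
  · rw [rcomp_X_pow m' hm']
    refine (expComp m hm).injective ?_
    rw [expComp_comp m m' L hm hm' hL hmm', hXpow k₂, hXpow N, expComp_apply, expComp_apply,
      hexpX, hexpX, hr, hs2, div_eq_div_iff (hXne _) (hXne _), ← map_mul, ← map_mul]
    congr 1
    rw [mul_assoc, ← pow_add, show L * N = n * k₁ + a + m * k₂ from by
      rw [mul_comm L N, ha]; ring]
end

section
/- If g ∘ h = x^n with g, h ∈ ℂ[x] and n a positive integer, then there is a linear polynomial μ ∈ ℂ[x] and a divisor d of n such that g ∘ μ = x^d and μ^{−1} ∘ h = x^{n/d}. -/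
open Polynomial

theorem decompositions_of_pow (n : ℕ) (hn : 0 < n) (g h : Polynomial ℂ)
    (hgh : g.comp h = Polynomial.X ^ n) :
    ∃ d : ℕ, d ∣ n ∧ ∃ μ ν : Polynomial ℂ, μ.degree = 1 ∧
      μ.comp ν = Polynomial.X ∧ ν.comp μ = Polynomial.X ∧
      g.comp μ = Polynomial.X ^ d ∧ ν.comp h = Polynomial.X ^ (n / d) := by
  -- degrees
  have hdeg : g.natDegree * h.natDegree = n := by
    have := congrArg natDegree hgh
    rwa [natDegree_comp, natDegree_X_pow] at this
  set d := g.natDegree with hd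
  set e := h.natDegree with he
  have hepos : 0 < e := Nat.pos_of_ne_zero (fun h0 => by simp [h0] at hdeg; omega)
  have hdpos : 0 < d := Nat.pos_of_ne_zero (fun h0 => by simp [h0] at hdeg; omega)
  -- derivative of h divides X^(n-1)
  have hder : derivative h ∣ (X : ℂ[X]) ^ (n - 1) := by
    have h1 : derivative (g.comp h) = derivative h * (derivative g).comp h :=
      derivative_comp g h
    rw [hgh, derivative_X_pow] at h1
    have hnC : IsUnit (C (n : ℂ)) :=
      isUnit_C.2 (isUnit_iff_ne_zero.2 (Nat.cast_ne_zero.2 hn.ne'))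
    exact hnC.dvd_mul_left.1 ⟨(derivative g).comp h, h1⟩
  -- hence derivative h = C c * X ^ k
  obtain ⟨k, hk, hassoc⟩ := (dvd_prime_pow Polynomial.prime_X _).1 hder
  obtain ⟨u, hu⟩ := hassoc.symm
  obtain ⟨c, hcu, hcC⟩ := Polynomial.isUnit_iff.1 u.isUnit
  have hc0 : c ≠ 0 := hcu.ne_zero
  have hderh : derivative h = C c * X ^ k := by
    rw [← hu, ← hcC]; ring
  -- h = C a * X ^ e + C b
  have hderne : derivative h ≠ 0 := by
    rw [hderh]
    exact mul_ne_zero (C_ne_zero.2 hc0) (pow_ne_zero _ X_ne_zero)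
  have hkeq : k = e - 1 := by
    have h1 : (derivative h).degree = ((e - 1 : ℕ) : WithBot ℕ) :=
      degree_derivative_eq h hepos
    have h2 : (derivative h).degree = (k : WithBot ℕ) := by
      rw [hderh, degree_C_mul_X_pow _ hc0]
    rw [h1] at h2
    exact_mod_cast h2.symm
  set a : ℂ := c / e with ha
  have hae : a * e = c :=
    div_mul_cancel₀ c (Nat.cast_ne_zero.2 hepos.ne' : (e : ℂ) ≠ 0)
  have ha0 : a ≠ 0 := by
    intro h0
    rw [h0, zero_mul] at hae
    exact hc0 hae.symm
  have hq : derivative (h - C a * X ^ e) = 0 := by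
    rw [derivative_sub, derivative_C_mul, derivative_X_pow, hderh, hkeq]
    rw [← mul_assoc, ← C_mul, mul_comm a, ← hae, mul_comm a]
    ring
  have hqc : h - C a * X ^ e = C ((h - C a * X ^ e).coeff 0) :=
    eq_C_of_natDegree_eq_zero (natDegree_eq_zero_of_derivative_eq_zero hq)
  set b : ℂ := (h - C a * X ^ e).coeff 0 with hb
  have hhab : h = C a * X ^ e + C b := by linear_combination hqc
  -- the linear polynomials
  refine ⟨d, ⟨e, hdeg.symm⟩, C a * X + C b, C a⁻¹ * (X - C b), degree_linear ha0, ?_, ?_, ?_, ?_⟩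
  · rw [add_comp, mul_comp, C_comp, X_comp, C_comp, ← mul_assoc, ← C_mul,
      mul_inv_cancel₀ ha0, C_1, one_mul, sub_add_cancel]
  · rw [mul_comp, C_comp, sub_comp, X_comp, C_comp, add_sub_cancel_right, ← mul_assoc,
      ← C_mul, inv_mul_cancel₀ ha0, C_1, one_mul]
  · -- g.comp μ = X ^ d
    have hh : h = (C a * X + C b).comp (X ^ e) := by
      simp [hhab]
    have hcomp : (g.comp (C a * X + C b)).comp (X ^ e) = X ^ n := by
      rw [comp_assoc, ← hh, hgh]
    have hexp : expand ℂ e (g.comp (C a * X + C b)) = expand ℂ e ((X : ℂ[X]) ^ d) := by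
      rw [expand_eq_comp_X_pow, expand_eq_comp_X_pow, hcomp, pow_comp, X_comp,
        ← pow_mul, mul_comm e d, hdeg]
    exact expand_injective hepos hexp
  · -- ν ∘ h = X ^ (n / d)
    have hnd : n / d = e := by
      rw [← hdeg, Nat.mul_div_cancel_left _ hdpos]
    rw [hnd, hhab, mul_comp, C_comp, sub_comp, X_comp, C_comp, add_sub_cancel_right,
      ← mul_assoc, ← C_mul, inv_mul_cancel₀ ha0, C_1, one_mul]
end

section
/- If g ∘ h = D_n with g, h ∈ ℂ[x] and n a positive integer, then there is a linear polynomial μ ∈ ℂ[x] and a divisor d of n such that g ∘ μ = D_d and μ^{−1} ∘ h = D_{n/d}. -/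
open Polynomial

/-- The Dickson polynomials `D_{n+1}` (first kind, `a = 1`) are monic of degree `n+1`. -/
lemma dickson_monic_natDegree :
    ∀ n : ℕ, (Polynomial.dickson 1 (1 : ℂ) (n + 1)).Monic ∧
      (Polynomial.dickson 1 (1 : ℂ) (n + 1)).natDegree = n + 1
  | 0 => by simp [Polynomial.dickson_one, monic_X]
  | 1 => by
      have h3 : Polynomial.dickson 1 (1 : ℂ) 2 = Polynomial.X ^ 2 - Polynomial.C 2 := by
        rw [Polynomial.dickson_two]
        push_cast
        simp only [map_ofNat, Polynomial.C_1]
        ring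
      constructor
      · rw [h3]
        exact Polynomial.Monic.sub_of_left (monic_X_pow 2)
          (lt_of_le_of_lt Polynomial.degree_C_le (by norm_num))
      · rw [h3, Polynomial.natDegree_sub_eq_left_of_natDegree_lt]
        · exact Polynomial.natDegree_X_pow 2
        · simp
  | n + 2 => by
      obtain ⟨hm1, hd1⟩ := dickson_monic_natDegree (n + 1)
      have hd0 : (Polynomial.dickson 1 (1 : ℂ) (n + 1)).natDegree ≤ n + 1 :=
        (dickson_monic_natDegree n).2.le
      rw [show n + 2 + 1 = n + 1 + 2 by ring, Polynomial.dickson_add_two]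
      have hmX : (Polynomial.X * Polynomial.dickson 1 (1 : ℂ) (n + 1 + 1)).Monic :=
        monic_X.mul hm1
      have hdX : (Polynomial.X * Polynomial.dickson 1 (1 : ℂ) (n + 1 + 1)).natDegree
          = n + 1 + 2 := by
        rw [Polynomial.natDegree_mul Polynomial.X_ne_zero hm1.ne_zero,
          Polynomial.natDegree_X, hd1]
        omega
      have hlt : (Polynomial.C (1 : ℂ) * Polynomial.dickson 1 (1 : ℂ) (n + 1)).natDegree
          < (Polynomial.X * Polynomial.dickson 1 (1 : ℂ) (n + 1 + 1)).natDegree := by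
        rw [hdX]
        refine lt_of_le_of_lt (Polynomial.natDegree_mul_le) ?_
        simp only [Polynomial.natDegree_C, zero_add]
        omega
      constructor
      · exact hmX.sub_of_left (Polynomial.degree_lt_degree hlt)
      · rw [Polynomial.natDegree_sub_eq_left_of_natDegree_lt hlt, hdX]

lemma dickson_monic {n : ℕ} (hn : 0 < n) : (Polynomial.dickson 1 (1 : ℂ) n).Monic := by
  obtain ⟨k, rfl⟩ := Nat.exists_eq_add_of_lt hn
  simpa using (dickson_monic_natDegree k).1

lemma dickson_natDegree {n : ℕ} (hn : 0 < n) :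
    (Polynomial.dickson 1 (1 : ℂ) n).natDegree = n := by
  obtain ⟨k, rfl⟩ := Nat.exists_eq_add_of_lt hn
  simpa using (dickson_monic_natDegree k).2

/-- Uniqueness of the inner factor of a decomposition, up to an additive constant,
when both inner factors are monic of the same degree. -/
lemma inner_unique {d m : ℕ} (hd : 0 < d) (hm : 0 < m) (g1 g2 h1 h2 : Polynomial ℂ)
    (hg1 : g1.natDegree = d) (hg2 : g2.natDegree = d)
    (hh1m : h1.Monic) (hh2m : h2.Monic)
    (hh1 : h1.natDegree = m) (hh2 : h2.natDegree = m)
    (heq : g1.comp h1 = g2.comp h2) : ∃ β : ℂ, h2 = h1 + Polynomial.C β := by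
  have hg1ne : g1 ≠ 0 := fun h => by simp [h] at hg1; omega
  have hg2ne : g2 ≠ 0 := fun h => by simp [h] at hg2; omega
  set e := g1.leadingCoeff with he
  have hene : e ≠ 0 := Polynomial.leadingCoeff_ne_zero.mpr hg1ne
  -- leading coefficients agree
  have hlc : g2.leadingCoeff = e := by
    have l1 : (g1.comp h1).leadingCoeff = e := by
      rw [Polynomial.leadingCoeff_comp (by rw [hh1]; omega), hh1m.leadingCoeff, one_pow, mul_one]
    have l2 : (g2.comp h2).leadingCoeff = g2.leadingCoeff := by
      rw [Polynomial.leadingCoeff_comp (by rw [hh2]; omega), hh2m.leadingCoeff, one_pow, mul_one]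
    rw [← l2, ← heq, l1]
  -- decompose the compositions
  have key : Polynomial.C e * (h1 ^ d - h2 ^ d)
      = g2.eraseLead.comp h2 - g1.eraseLead.comp h1 := by
    have e1 : g1.comp h1 = g1.eraseLead.comp h1 + Polynomial.C e * h1 ^ d := by
      conv_lhs => rw [← g1.eraseLead_add_C_mul_X_pow]
      rw [Polynomial.add_comp, Polynomial.mul_comp, Polynomial.C_comp, Polynomial.X_pow_comp, hg1]
    have e2 : g2.comp h2 = g2.eraseLead.comp h2 + Polynomial.C e * h2 ^ d := by
      conv_lhs => rw [← g2.eraseLead_add_C_mul_X_pow]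
      rw [Polynomial.add_comp, Polynomial.mul_comp, Polynomial.C_comp, Polynomial.X_pow_comp,
        hg2, hlc]
    have := heq
    rw [e1, e2] at this
    linear_combination this
  -- degree bound on the right-hand side
  have hb1 : (g1.eraseLead.comp h1).natDegree ≤ (d - 1) * m := by
    refine le_trans (Polynomial.natDegree_comp_le) ?_
    exact Nat.mul_le_mul (by rw [← hg1]; exact g1.eraseLead_natDegree_le) (le_of_eq hh1)
  have hb2 : (g2.eraseLead.comp h2).natDegree ≤ (d - 1) * m := by
    refine le_trans (Polynomial.natDegree_comp_le) ?_
    exact Nat.mul_le_mul (by rw [← hg2]; exact g2.eraseLead_natDegree_le) (le_of_eq hh2)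
  have hpow : (h1 ^ d - h2 ^ d).natDegree ≤ (d - 1) * m := by
    have : (Polynomial.C e * (h1 ^ d - h2 ^ d)).natDegree ≤ (d - 1) * m := by
      rw [key]
      exact le_trans (Polynomial.natDegree_sub_le _ _) (max_le hb2 hb1)
    rwa [Polynomial.natDegree_C_mul hene] at this
  -- the geometric sum factor
  set S := ∑ i ∈ Finset.range d, h1 ^ i * h2 ^ (d - 1 - i) with hS
  have hfact : S * (h1 - h2) = h1 ^ d - h2 ^ d := geom_sum₂_mul h1 h2 d
  have hterm : ∀ i ∈ Finset.range d,
      (h1 ^ i * h2 ^ (d - 1 - i)).coeff ((d - 1) * m) = 1 := by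
    intro i hi
    rw [Finset.mem_range] at hi
    have hmon : (h1 ^ i * h2 ^ (d - 1 - i)).Monic := (hh1m.pow i).mul (hh2m.pow _)
    have hdeg : (h1 ^ i * h2 ^ (d - 1 - i)).natDegree = (d - 1) * m := by
      rw [Polynomial.natDegree_mul ((hh1m.pow i).ne_zero) ((hh2m.pow _).ne_zero),
        Polynomial.natDegree_pow, Polynomial.natDegree_pow, hh1, hh2]
      have : i + (d - 1 - i) = d - 1 := by omega
      calc i * m + (d - 1 - i) * m = (i + (d - 1 - i)) * m := by ring
        _ = (d - 1) * m := by rw [this]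
    rw [← hdeg]
    exact hmon.coeff_natDegree
  have hScoeff : S.coeff ((d - 1) * m) = d := by
    rw [hS, Polynomial.finset_sum_coeff, Finset.sum_congr rfl hterm]
    simp
  have hSne : S ≠ 0 := by
    intro h
    rw [h, Polynomial.coeff_zero] at hScoeff
    exact Nat.cast_ne_zero.mpr (by omega) hScoeff.symm
  have hSdeg : (d - 1) * m ≤ S.natDegree :=
    Polynomial.le_natDegree_of_ne_zero (by rw [hScoeff]; exact Nat.cast_ne_zero.mpr (by omega))
  -- conclude h1 - h2 is constant
  by_cases hcase : h1 = h2
  · exact ⟨0, by rw [hcase]; simp⟩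
  · have hne : h1 - h2 ≠ 0 := sub_ne_zero.mpr hcase
    have : S.natDegree + (h1 - h2).natDegree ≤ (d - 1) * m := by
      rw [← Polynomial.natDegree_mul hSne hne, hfact]
      exact hpow
    have ht : (h1 - h2).natDegree = 0 := by omega
    obtain ⟨a, ha⟩ := Polynomial.natDegree_eq_zero.mp ht
    refine ⟨-a, ?_⟩
    have : h1 - h2 = Polynomial.C a := ha.symm
    rw [map_neg]
    linear_combination -this

theorem decompositions_of_dickson (n : ℕ) (hn : 0 < n) (g h : Polynomial ℂ)
    (hgh : g.comp h = Polynomial.dickson 1 (1 : ℂ) n) :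
    ∃ d : ℕ, d ∣ n ∧ ∃ μ ν : Polynomial ℂ, μ.degree = 1 ∧
      μ.comp ν = Polynomial.X ∧ ν.comp μ = Polynomial.X ∧
      g.comp μ = Polynomial.dickson 1 (1 : ℂ) d ∧
      ν.comp h = Polynomial.dickson 1 (1 : ℂ) (n / d) := by
  set d := g.natDegree with hdd
  set m := h.natDegree with hmm
  have hdm : d * m = n := by
    rw [hdd, hmm, ← Polynomial.natDegree_comp, hgh, dickson_natDegree hn]
  have hd : 0 < d := by
    rcases Nat.eq_zero_or_pos d with hz | hz
    · rw [hz, zero_mul] at hdm; omega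
    · exact hz
  have hm : 0 < m := by
    rcases Nat.eq_zero_or_pos m with hz | hz
    · rw [hz, mul_zero] at hdm; omega
    · exact hz
  have hhne : h ≠ 0 := fun h' => by simp [h'] at hmm; omega
  set c := h.leadingCoeff with hc
  have hcne : c ≠ 0 := Polynomial.leadingCoeff_ne_zero.mpr hhne
  -- normalized inner polynomial
  set h' := Polynomial.C c⁻¹ * h with hh'
  have hh'm : h'.Monic := by
    rw [Polynomial.Monic, hh', Polynomial.leadingCoeff_mul, Polynomial.leadingCoeff_C]
    exact inv_mul_cancel₀ hcne
  have hh'd : h'.natDegree = m := by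
    rw [hh', Polynomial.natDegree_C_mul (inv_ne_zero hcne)]
  set g' := g.comp (Polynomial.C c * Polynomial.X) with hg'
  have hg'd : g'.natDegree = d := by
    rw [hg', Polynomial.natDegree_comp]
    have : (Polynomial.C c * Polynomial.X).natDegree = 1 := by
      rw [Polynomial.natDegree_C_mul hcne, Polynomial.natDegree_X]
    rw [this, mul_one]
  have hcomp : g'.comp h' = g.comp h := by
    rw [hg', Polynomial.comp_assoc]
    congr 1
    rw [Polynomial.mul_comp, Polynomial.C_comp, Polynomial.X_comp, hh', ← mul_assoc,
      ← Polynomial.C_mul, mul_inv_cancel₀ hcne, Polynomial.C_1, one_mul]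
  -- apply uniqueness against D_d ∘ D_m
  have hDm : (Polynomial.dickson 1 (1 : ℂ) m).Monic := dickson_monic hm
  have hDmd : (Polynomial.dickson 1 (1 : ℂ) m).natDegree = m := dickson_natDegree hm
  have hDdd : (Polynomial.dickson 1 (1 : ℂ) d).natDegree = d := dickson_natDegree hd
  have heq : (Polynomial.dickson 1 (1 : ℂ) d).comp (Polynomial.dickson 1 (1 : ℂ) m)
      = g'.comp h' := by
    rw [hcomp, hgh, ← hdm, Polynomial.dickson_one_one_mul]
  obtain ⟨β, hβ⟩ := inner_unique hd hm _ g' _ h' hDdd hg'd hDm hh'm hDmd hh'd heq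
  -- build the linear polynomials
  refine ⟨d, ⟨m, hdm.symm⟩, Polynomial.C c * Polynomial.X + Polynomial.C (c * β),
    Polynomial.C c⁻¹ * Polynomial.X - Polynomial.C β, Polynomial.degree_linear hcne, ?_, ?_, ?_, ?_⟩
  · -- μ ∘ ν = X
    rw [Polynomial.add_comp, Polynomial.mul_comp, Polynomial.C_comp, Polynomial.X_comp,
      Polynomial.C_comp, mul_sub, ← mul_assoc, ← Polynomial.C_mul, mul_inv_cancel₀ hcne,
      Polynomial.C_1, one_mul, ← Polynomial.C_mul]
    ring
  · -- ν ∘ μ = X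
    rw [Polynomial.sub_comp, Polynomial.mul_comp, Polynomial.C_comp, Polynomial.X_comp,
      Polynomial.C_comp, mul_add, ← mul_assoc, ← Polynomial.C_mul, inv_mul_cancel₀ hcne,
      Polynomial.C_1, one_mul, ← Polynomial.C_mul, inv_mul_cancel_left₀ hcne]
    ring
  · -- g ∘ μ = D_d
    have hν : (Polynomial.C c⁻¹ * Polynomial.X - Polynomial.C β).comp h
        = Polynomial.dickson 1 (1 : ℂ) m := by
      simp only [Polynomial.sub_comp, Polynomial.mul_comp, Polynomial.C_comp, Polynomial.X_comp]
      rw [← hh', hβ]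
      ring
    have hgμ : (g.comp (Polynomial.C c * Polynomial.X + Polynomial.C (c * β))).comp
        (Polynomial.dickson 1 (1 : ℂ) m)
        = (Polynomial.dickson 1 (1 : ℂ) d).comp (Polynomial.dickson 1 (1 : ℂ) m) := by
      rw [← hν, Polynomial.comp_assoc]
      have : (Polynomial.C c * Polynomial.X + Polynomial.C (c * β)).comp
          ((Polynomial.C c⁻¹ * Polynomial.X - Polynomial.C β).comp h) = h := by
        simp only [Polynomial.add_comp, Polynomial.sub_comp, Polynomial.mul_comp,
          Polynomial.C_comp, Polynomial.X_comp]
        rw [mul_sub, ← mul_assoc, ← Polynomial.C_mul, mul_inv_cancel₀ hcne,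
          Polynomial.C_1, one_mul, ← Polynomial.C_mul]
        ring
      rw [this, hgh, ← hdm, Polynomial.dickson_one_one_mul, hν]
    -- cancel the right factor D_m
    have hzero : (g.comp (Polynomial.C c * Polynomial.X + Polynomial.C (c * β))
        - Polynomial.dickson 1 (1 : ℂ) d).comp (Polynomial.dickson 1 (1 : ℂ) m) = 0 := by
      rw [Polynomial.sub_comp, hgμ, sub_self]
    rcases Polynomial.comp_eq_zero_iff.mp hzero with h0 | ⟨_, h1⟩
    · linear_combination h0
    · exfalso
      have := congrArg Polynomial.natDegree h1
      rw [hDmd, Polynomial.natDegree_C] at this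
      omega
  · -- ν ∘ h = D_{n/d}
    have hnd : n / d = m := by rw [← hdm, Nat.mul_div_cancel_left _ hd]
    rw [hnd]
    simp only [Polynomial.sub_comp, Polynomial.mul_comp, Polynomial.C_comp, Polynomial.X_comp]
    rw [← hh', hβ]
    ring
end

section
/- For every odd positive integer n, D_n(x) + D_n(y) is divisible by x + y in ℂ[x, y]; moreover D_n(x) + D_n(y) = (x + y)·Φ_n(x, y), where Φ_n(x,y) is the product over odd k with 1 ≤ k < n of (x² − 2xy·cos(πk/n) + y² − 4 sin²(πk/n)). -/
open Polynomial MvPolynomial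

namespace DicksonFactorAux

open Complex Finset

noncomputable def ω (n : ℕ) : ℂ := Complex.exp (Real.pi * Complex.I / n)

lemma omega_ne_zero (n : ℕ) : ω n ≠ 0 := Complex.exp_ne_zero _

lemma omega_pow_n {n : ℕ} (hn : 0 < n) : ω n ^ n = -1 := by
  rw [ω, ← Complex.exp_nat_mul]
  have hne : (n : ℂ) ≠ 0 := Nat.cast_ne_zero.mpr hn.ne'
  rw [show (n : ℂ) * (Real.pi * Complex.I / n) = Real.pi * Complex.I by field_simp]
  exact Complex.exp_pi_mul_I

lemma omega_pow_2n {n : ℕ} (hn : 0 < n) : ω n ^ (2 * n) = 1 := by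
  rw [mul_comm, pow_mul, omega_pow_n hn, neg_one_sq]

lemma omega_pow_eq_exp (n k : ℕ) :
    ω n ^ k = Complex.exp ((Real.pi : ℂ) * k / n * Complex.I) := by
  rw [ω, ← Complex.exp_nat_mul]
  congr 1
  ring

lemma omega_pow_rev {n k : ℕ} (hn : 0 < n) (hk : k ≤ 2 * n) :
    ω n ^ (2 * n - k) = Complex.exp (-((Real.pi : ℂ) * k / n * Complex.I)) := by
  have h1 : ω n ^ (2 * n - k) * ω n ^ k = 1 := by
    rw [← pow_add, Nat.sub_add_cancel hk, omega_pow_2n hn]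
  have h2 : Complex.exp (-((Real.pi : ℂ) * k / n * Complex.I)) * ω n ^ k = 1 := by
    rw [omega_pow_eq_exp, ← Complex.exp_add, neg_add_cancel, Complex.exp_zero]
  exact mul_right_cancel₀ (pow_ne_zero _ (omega_ne_zero n)) (h1.trans h2.symm)

lemma omega_mul_rev {n k : ℕ} (hn : 0 < n) (hk : k ≤ 2 * n) :
    ω n ^ k * ω n ^ (2 * n - k) = 1 := by
  rw [← pow_add, Nat.add_sub_cancel' hk, omega_pow_2n hn]

lemma two_cos_eq {n k : ℕ} (hn : 0 < n) (hk : k ≤ 2 * n) :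
    2 * Complex.cos ((Real.pi : ℂ) * k / n) = ω n ^ k + ω n ^ (2 * n - k) := by
  rw [Complex.cos, omega_pow_eq_exp, omega_pow_rev hn hk]
  ring_nf

lemma four_sin_sq_eq {n k : ℕ} (hn : 0 < n) (hk : k ≤ 2 * n) :
    4 * Complex.sin ((Real.pi : ℂ) * k / n) ^ 2
      = 2 - (ω n ^ k) ^ 2 - (ω n ^ (2 * n - k)) ^ 2 := by
  have huv := omega_mul_rev hn hk
  rw [Complex.sin, omega_pow_eq_exp n k, omega_pow_rev hn hk,
    show -((Real.pi : ℂ) * k / n) * Complex.I = -((Real.pi : ℂ) * k / n * Complex.I) from by ring]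
  rw [omega_pow_eq_exp n k, omega_pow_rev hn hk] at huv
  set U := Complex.exp ((Real.pi : ℂ) * k / n * Complex.I)
  set V := Complex.exp (-((Real.pi : ℂ) * k / n * Complex.I))
  have hI : (Complex.I : ℂ) ^ 2 = -1 := Complex.I_sq
  linear_combination (V - U) ^ 2 * hI + 2 * huv

lemma exists_pair (a : ℂ) : ∃ z z' : ℂ, z * z' = 1 ∧ z + z' = a := by
  obtain ⟨d, hd⟩ := IsAlgClosed.exists_pow_nat_eq (k := ℂ) (a ^ 2 - 4) zero_lt_two
  exact ⟨(a + d) / 2, (a - d) / 2, by linear_combination (-1 / 4 : ℂ) * hd, by ring⟩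

lemma prod_roots {n : ℕ} (hn : 0 < n) (z c : ℂ) :
    ∏ j ∈ Finset.range n, (z - ω n ^ (2 * j + 1) * c) = z ^ n + c ^ n := by
  have hprim : IsPrimitiveRoot (ω n ^ 2) n := by
    have h := Complex.isPrimitiveRoot_exp n hn.ne'
    have h2 : ω n ^ 2 = Complex.exp (2 * Real.pi * Complex.I / n) := by
      rw [ω, ← Complex.exp_nat_mul]
      congr 1
      push_cast
      ring
    rwa [h2]
  have he : (ω n * c) ^ n = -(c ^ n) := by
    rw [mul_pow, omega_pow_n hn]; ring
  have h := X_pow_sub_C_eq_prod hprim hn he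
  have h2 := congrArg (Polynomial.eval z) h
  simp only [Polynomial.eval_sub, Polynomial.eval_pow, Polynomial.eval_X, Polynomial.eval_C,
    Polynomial.eval_prod] at h2
  rw [sub_neg_eq_add] at h2
  rw [h2]
  refine Finset.prod_congr rfl fun j _ => ?_
  rw [← pow_mul]
  ring

lemma key (n : ℕ) (hn : 0 < n) (hodd : Odd n) (a b : ℂ) :
    (Polynomial.dickson 1 (1 : ℂ) n).eval a + (Polynomial.dickson 1 (1 : ℂ) n).eval b =
      (a + b) * ∏ k ∈ (Finset.Ico 1 n).filter (fun k => Odd k),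
        (a ^ 2 - 2 * Complex.cos ((Real.pi : ℂ) * k / n) * a * b + b ^ 2
          - 4 * Complex.sin ((Real.pi : ℂ) * k / n) ^ 2) := by
  obtain ⟨z, z', hz, rfl⟩ := exists_pair a
  obtain ⟨w, w', hw, rfl⟩ := exists_pair b
  set G : ℕ → ℂ := fun k => (z + z') - ω n ^ k * w - ω n ^ (2 * n - k) * w' with hG
  set S := (Finset.Ico 1 n).filter (fun k => Odd k) with hS
  set T := (Finset.Ico 1 (2 * n)).filter (fun k => Odd k) with hT
  have hnmod : n % 2 = 1 := Nat.odd_iff.mp hodd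
  -- Step 1: each quadratic factor equals G k * G (2n - k)
  have step1 : ∀ k ∈ S,
      ((z + z') ^ 2 - 2 * Complex.cos ((Real.pi : ℂ) * k / n) * (z + z') * (w + w')
        + (w + w') ^ 2 - 4 * Complex.sin ((Real.pi : ℂ) * k / n) ^ 2)
      = G k * G (2 * n - k) := by
    intro k hk
    simp only [hS, Finset.mem_filter, Finset.mem_Ico] at hk
    have hk2n : k ≤ 2 * n := by omega
    have hrev : 2 * n - (2 * n - k) = k := by omega
    have huv := omega_mul_rev hn hk2n
    rw [two_cos_eq hn hk2n, four_sin_sq_eq hn hk2n, hG]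
    simp only [hrev]
    set U := ω n ^ k
    set V := ω n ^ (2 * n - k)
    linear_combination (-(w ^ 2 + w' ^ 2)) * huv + (2 - U ^ 2 - V ^ 2) * hw
  -- Step 2: T is the image of j ↦ 2j+1 on range n
  have hTimg : T = (Finset.range n).image (fun j => 2 * j + 1) := by
    ext m
    simp only [hT, Finset.mem_filter, Finset.mem_Ico, Finset.mem_image, Finset.mem_range,
      Nat.odd_iff]
    constructor
    · rintro ⟨⟨h1, h2⟩, h3⟩
      exact ⟨m / 2, by omega, by omega⟩
    · rintro ⟨j, hj, rfl⟩
      omega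
  -- Step 3: T decomposes as insert n (S ∪ image (2n - ·) S)
  have hTdec : T = insert n (S ∪ S.image (fun k => 2 * n - k)) := by
    ext m
    simp only [hT, hS, Finset.mem_insert, Finset.mem_union, Finset.mem_image, Finset.mem_filter,
      Finset.mem_Ico, Nat.odd_iff]
    constructor
    · rintro ⟨⟨h1, h2⟩, h3⟩
      rcases lt_trichotomy m n with h | h | h
      · exact Or.inr (Or.inl ⟨⟨h1, h⟩, h3⟩)
      · exact Or.inl h
      · exact Or.inr (Or.inr ⟨2 * n - m, ⟨⟨by omega, by omega⟩, by omega⟩, by omega⟩)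
    · rintro (rfl | ⟨⟨h1, h2⟩, h3⟩ | ⟨j, ⟨⟨h1, h2⟩, h3⟩, rfl⟩) <;> omega
  have hnotmem : n ∉ S ∪ S.image (fun k => 2 * n - k) := by
    intro hmem
    rcases Finset.mem_union.mp hmem with h | h
    · rw [hS, Finset.mem_filter, Finset.mem_Ico] at h
      exact absurd h.1.2 (lt_irrefl n)
    · obtain ⟨k, hk, hkn⟩ := Finset.mem_image.mp h
      rw [hS, Finset.mem_filter, Finset.mem_Ico] at hk
      omega
  have hdisj : Disjoint S (S.image (fun k => 2 * n - k)) := by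
    rw [Finset.disjoint_left]
    intro m hm hm'
    rw [hS, Finset.mem_filter, Finset.mem_Ico] at hm
    obtain ⟨k, hk, hkm⟩ := Finset.mem_image.mp hm'
    rw [hS, Finset.mem_filter, Finset.mem_Ico] at hk
    omega
  have hinj2 : ∀ x ∈ S, ∀ y ∈ S, 2 * n - x = 2 * n - y → x = y := by
    intro p hp q hq h
    rw [hS, Finset.mem_filter, Finset.mem_Ico] at hp hq
    omega
  -- Step 4: product over T of G
  have hprodT : ∏ k ∈ T, G k = G n * ∏ k ∈ S, G k * G (2 * n - k) := by
    rw [hTdec, Finset.prod_insert hnotmem, Finset.prod_union hdisj, Finset.prod_image hinj2,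
      ← Finset.prod_mul_distrib]
  have hGn : G n = (z + z') + (w + w') := by
    have h2n : 2 * n - n = n := by omega
    rw [hG]
    simp only [h2n, omega_pow_n hn]
    ring
  have hprodrange : ∏ j ∈ Finset.range n, G (2 * j + 1)
      = z' ^ n * ((z ^ n + w ^ n) * (z ^ n + w' ^ n)) := by
    have hfac : ∀ j ∈ Finset.range n, G (2 * j + 1)
        = z' * ((z - ω n ^ (2 * j + 1) * w) * (z - ω n ^ (2 * (n - 1 - j) + 1) * w')) := by
      intro j hj
      simp only [Finset.mem_range] at hj
      have hexp : 2 * n - (2 * j + 1) = 2 * (n - 1 - j) + 1 := by omega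
      have hUV : ω n ^ (2 * j + 1) * ω n ^ (2 * (n - 1 - j) + 1) = 1 := by
        rw [← pow_add, show 2 * j + 1 + (2 * (n - 1 - j) + 1) = 2 * n by omega, omega_pow_2n hn]
      rw [hG]
      simp only [hexp]
      set U := ω n ^ (2 * j + 1)
      set V := ω n ^ (2 * (n - 1 - j) + 1)
      linear_combination (V * w' + U * w - z) * hz - z' * w * w' * hUV - z' * hw
    rw [Finset.prod_congr rfl hfac, Finset.prod_mul_distrib, Finset.prod_const, Finset.card_range,
      Finset.prod_mul_distrib, prod_roots hn z w,
      Finset.prod_range_reflect (fun j => z - ω n ^ (2 * j + 1) * w') n, prod_roots hn z w']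
  -- assemble
  have h1 : z ^ n * z' ^ n = 1 := by rw [← mul_pow, hz, one_pow]
  have h2 : w ^ n * w' ^ n = 1 := by rw [← mul_pow, hw, one_pow]
  have hinj : ∀ p ∈ Finset.range n, ∀ q ∈ Finset.range n, 2 * p + 1 = 2 * q + 1 → p = q := by
    intro p _ q _ h; omega
  calc (Polynomial.dickson 1 (1 : ℂ) n).eval (z + z')
        + (Polynomial.dickson 1 (1 : ℂ) n).eval (w + w')
      = z ^ n + z' ^ n + (w ^ n + w' ^ n) := by
        rw [Polynomial.dickson_one_one_eval_add_inv z z' hz,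
          Polynomial.dickson_one_one_eval_add_inv w w' hw]
    _ = z' ^ n * ((z ^ n + w ^ n) * (z ^ n + w' ^ n)) := by
        linear_combination (-(z ^ n) - w' ^ n - w ^ n) * h1 - z' ^ n * h2
    _ = ∏ j ∈ Finset.range n, G (2 * j + 1) := hprodrange.symm
    _ = ∏ k ∈ T, G k := by rw [hTimg, Finset.prod_image hinj]
    _ = G n * ∏ k ∈ S, G k * G (2 * n - k) := hprodT
    _ = ((z + z') + (w + w')) * ∏ k ∈ S,
          ((z + z') ^ 2 - 2 * Complex.cos ((Real.pi : ℂ) * k / n) * (z + z') * (w + w')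
            + (w + w') ^ 2 - 4 * Complex.sin ((Real.pi : ℂ) * k / n) ^ 2) := by
        rw [hGn, Finset.prod_congr rfl step1]

end DicksonFactorAux

theorem dickson_add_dickson_factorization (n : ℕ) (hn : 0 < n) (hodd : Odd n) :
    let x : MvPolynomial (Fin 2) ℂ := MvPolynomial.X 0
    let y : MvPolynomial (Fin 2) ℂ := MvPolynomial.X 1
    let D : MvPolynomial (Fin 2) ℂ :=
      Polynomial.aeval x (Polynomial.dickson 1 (1 : ℂ) n) +
        Polynomial.aeval y (Polynomial.dickson 1 (1 : ℂ) n)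
    let Φ : MvPolynomial (Fin 2) ℂ :=
      ∏ k ∈ (Finset.Ico 1 n).filter (fun k => Odd k),
        (x ^ 2 - MvPolynomial.C (2 * Complex.cos ((Real.pi : ℂ) * k / n)) * x * y + y ^ 2
          - MvPolynomial.C (4 * Complex.sin ((Real.pi : ℂ) * k / n) ^ 2))
    (x + y) ∣ D ∧ D = (x + y) * Φ := by
  intro x y D Φ
  have heq : D = (x + y) * Φ := by
    apply MvPolynomial.funext
    intro v
    have hcoe : ∀ q : MvPolynomial (Fin 2) ℂ,
        MvPolynomial.eval v q = MvPolynomial.aeval v q := fun q => by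
      rw [← MvPolynomial.coe_aeval_eq_eval]; rfl
    rw [hcoe, hcoe]
    simp only [D, Φ, x, y, map_add, map_mul, map_sub, map_pow, map_prod,
      ← Polynomial.aeval_algHom_apply, MvPolynomial.aeval_X, MvPolynomial.aeval_C,
      Algebra.algebraMap_self, RingHom.id_apply, Polynomial.coe_aeval_eq_eval]
    exact DicksonFactorAux.key n hn hodd (v 0) (v 1)
  exact ⟨⟨Φ, heq⟩, heq⟩
end

section
/- Suppose g, h, p ∈ ℂ[x] are nonzero and g ∘ h = (x² − 4)·p(x)². Then after replacing g and h by g ∘ μ and μ^{−1} ∘ h for some linear μ ∈ ℂ[x], there exist B, D ∈ ℂ[x] and a positive integer n such that either (1) g = x·B² and h = (x² − 4)·D², or (2) g = (x² − 4)·B² and h = D_n. -/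
open Polynomial

lemma rootMult_factor (F : Polynomial ℂ) (hF : F ≠ 0) (a : ℂ) :
    ∃ G : Polynomial ℂ, F = (X - C a) ^ (rootMultiplicity a F) * G ∧ G.eval a ≠ 0 ∧
      ∀ b : ℂ, b ≠ a → rootMultiplicity b G = rootMultiplicity b F := by
  refine ⟨F /ₘ (X - C a) ^ (rootMultiplicity a F),
    (pow_mul_divByMonic_rootMultiplicity_eq F a).symm,
    eval_divByMonic_pow_rootMultiplicity_ne_zero a hF, fun b hb => ?_⟩
  set G := F /ₘ (X - C a) ^ (rootMultiplicity a F) with hG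
  have hFG : F = (X - C a) ^ (rootMultiplicity a F) * G :=
    (pow_mul_divByMonic_rootMultiplicity_eq F a).symm
  have hmul : rootMultiplicity b F
      = rootMultiplicity b ((X - C a) ^ (rootMultiplicity a F)) + rootMultiplicity b G := by
    conv_lhs => rw [hFG]
    rw [rootMultiplicity_mul (by rw [← hFG]; exact hF)]
  have hz : rootMultiplicity b ((X - C a) ^ (rootMultiplicity a F)) = 0 := by
    apply rootMultiplicity_eq_zero
    simp [IsRoot, sub_eq_zero, hb]
  omega

lemma sq_of_even_rootMultiplicity' :
    ∀ (n : ℕ) (F : Polynomial ℂ), F.natDegree = n → F ≠ 0 →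
    (∀ a : ℂ, Even (rootMultiplicity a F)) → ∃ E : Polynomial ℂ, F = E ^ 2 := by
  intro n
  induction n using Nat.strong_induction_on with
  | _ n ih =>
    intro F hn hF he
    rcases Nat.eq_zero_or_pos n with h0 | hpos
    · have : F.natDegree = 0 := by rw [hn, h0]
      obtain ⟨c, rfl⟩ := natDegree_eq_zero.mp this
      obtain ⟨s, hs⟩ := IsAlgClosed.exists_pow_nat_eq c (n := 2) (by norm_num)
      exact ⟨C s, by rw [← hs]; simp [C_pow]⟩
    · have hdeg : F.degree ≠ 0 := by
        rw [degree_eq_natDegree hF, hn]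
        exact_mod_cast Nat.pos_iff_ne_zero.mp hpos
      obtain ⟨a, ha⟩ := IsAlgClosed.exists_root F hdeg
      have hmpos : 0 < rootMultiplicity a F := (rootMultiplicity_pos hF).mpr ha
      obtain ⟨G, hFG, hGa, hGmult⟩ := rootMult_factor F hF a
      have hGne : G ≠ 0 := fun h => hF (by rw [hFG, h, mul_zero])
      have hGa0 : rootMultiplicity a G = 0 := rootMultiplicity_eq_zero (by simpa [IsRoot] using hGa)
      have hGdeg : G.natDegree < n := by
        have h1 := natDegree_mul (p := (X - C a) ^ (rootMultiplicity a F)) (q := G)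
          (pow_ne_zero _ (X_sub_C_ne_zero a)) hGne
        rw [← hFG, hn] at h1
        have hxm : ((X - C a) ^ (rootMultiplicity a F)).natDegree = rootMultiplicity a F := by
          simp [natDegree_pow]
        omega
      obtain ⟨E₀, hE₀⟩ := ih G.natDegree hGdeg G rfl hGne (by
        intro b
        by_cases hb : b = a
        · rw [hb, hGa0]; exact Even.zero
        · rw [hGmult b hb]; exact he b)
      obtain ⟨k, hk⟩ := he a
      refine ⟨(X - C a) ^ k * E₀, ?_⟩
      rw [hFG, hE₀, mul_pow, ← pow_mul]
      congr 2
      omega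

lemma sq_of_even_rootMultiplicity (F : Polynomial ℂ) (hF : F ≠ 0)
    (he : ∀ a : ℂ, Even (rootMultiplicity a F)) : ∃ E : Polynomial ℂ, F = E ^ 2 :=
  sq_of_even_rootMultiplicity' F.natDegree F rfl hF he

lemma rootMultiplicity_pow_c (F : Polynomial ℂ) (m : ℕ) (hF : F ≠ 0) (a : ℂ) :
    rootMultiplicity a (F ^ m) = m * rootMultiplicity a F := by
  induction m with
  | zero => simp [rootMultiplicity_eq_zero, IsRoot]
  | succ k ihk =>
      rw [pow_succ, rootMultiplicity_mul (mul_ne_zero (pow_ne_zero _ hF) hF), ihk]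
      ring

lemma odd_one_extract (F : Polynomial ℂ) (hF : F ≠ 0) (c : ℂ)
    (hc : Odd (rootMultiplicity c F))
    (hev : ∀ b : ℂ, b ≠ c → Even (rootMultiplicity b F)) :
    ∃ E : Polynomial ℂ, F = (X - C c) * E ^ 2 := by
  obtain ⟨G, hFG, hGc, hGmult⟩ := rootMult_factor F hF c
  have hGne : G ≠ 0 := fun h0 => hF (by rw [hFG, h0, mul_zero])
  obtain ⟨E₀, hE₀⟩ := sq_of_even_rootMultiplicity G hGne (by
    intro b
    by_cases hb : b = c
    · rw [hb, rootMultiplicity_eq_zero (by simpa [IsRoot] using hGc)]; exact Even.zero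
    · rw [hGmult b hb]; exact hev b hb)
  obtain ⟨k, hk⟩ := hc
  refine ⟨(X - C c) ^ k * E₀, ?_⟩
  rw [hFG, hE₀, hk, mul_pow, ← pow_mul]
  ring

lemma odd_two_extract (F : Polynomial ℂ) (hF : F ≠ 0) (c d : ℂ) (hcd : c ≠ d)
    (hc : Odd (rootMultiplicity c F)) (hd : Odd (rootMultiplicity d F))
    (hev : ∀ b : ℂ, b ≠ c → b ≠ d → Even (rootMultiplicity b F)) :
    ∃ E : Polynomial ℂ, F = (X - C c) * (X - C d) * E ^ 2 := by
  obtain ⟨G, hFG, hGc, hGmult⟩ := rootMult_factor F hF c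
  have hGne : G ≠ 0 := fun h0 => hF (by rw [hFG, h0, mul_zero])
  have hGc0 : rootMultiplicity c G = 0 := rootMultiplicity_eq_zero (by simpa [IsRoot] using hGc)
  obtain ⟨E₀, hE₀⟩ := odd_one_extract G hGne d
    (by rw [hGmult d (Ne.symm hcd)]; exact hd)
    (by
      intro b hbd
      by_cases hb : b = c
      · rw [hb, hGc0]; exact Even.zero
      · rw [hGmult b hb]; exact hev b hb hbd)
  obtain ⟨k, hk⟩ := hc
  refine ⟨(X - C c) ^ k * E₀, ?_⟩
  rw [hFG, hE₀, hk, mul_pow, ← pow_mul]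
  ring

lemma exists_odd_root_of_odd_natDegree (F : Polynomial ℂ) (hF : F ≠ 0)
    (hdeg : Odd F.natDegree) : ∃ a : ℂ, Odd (rootMultiplicity a F) := by
  by_contra hcon
  push_neg at hcon
  simp only [Nat.not_odd_iff_even] at hcon
  obtain ⟨E, hE⟩ := sq_of_even_rootMultiplicity F hF hcon
  rw [hE, natDegree_pow] at hdeg
  rcases hdeg with ⟨k, hk⟩
  omega

lemma comp_ne_zero_c (g h : Polynomial ℂ) (hg : g ≠ 0) (hh : 0 < h.natDegree) :
    g.comp h ≠ 0 := by
  intro h0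
  rcases comp_eq_zero_iff.mp h0 with h1 | h1
  · exact hg h1
  · rw [h1.2] at hh; simp at hh

lemma rootMultiplicity_comp_c (g h : Polynomial ℂ) (hg : g ≠ 0) (hh : 0 < h.natDegree) (a : ℂ) :
    rootMultiplicity a (g.comp h)
      = rootMultiplicity (h.eval a) g * rootMultiplicity a (h - C (h.eval a)) := by
  obtain ⟨q, hgq, hqb, -⟩ := rootMult_factor g hg (h.eval a)
  have hch : g.comp h = (h - C (h.eval a)) ^ (rootMultiplicity (h.eval a) g) * q.comp h := by
    conv_lhs => rw [hgq]
    simp [mul_comp, pow_comp, sub_comp]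
  have hsub : h - C (h.eval a) ≠ 0 := by
    intro h0
    have : h = C (h.eval a) := sub_eq_zero.mp h0
    rw [this, natDegree_C] at hh
    exact Nat.lt_irrefl 0 hh
  have hne : (h - C (h.eval a)) ^ (rootMultiplicity (h.eval a) g) * q.comp h ≠ 0 := by
    rw [← hch]; exact comp_ne_zero_c g h hg hh
  have hq0 : rootMultiplicity a (q.comp h) = 0 :=
    rootMultiplicity_eq_zero (by simp [IsRoot, eval_comp, hqb])
  rw [hch, rootMultiplicity_mul hne, rootMultiplicity_pow_c _ _ hsub, hq0, add_zero]

noncomputable def plift (A : Polynomial ℂ) (N : ℕ) : Polynomial ℂ :=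
  A.sum fun i a => C a * X ^ (N - i) * (X ^ 2 + 1) ^ i

lemma plift_eval (A : Polynomial ℂ) (N : ℕ) (hN : A.natDegree ≤ N) (z : ℂ) (hz : z ≠ 0) :
    (plift A N).eval z = z ^ N * A.eval (z + z⁻¹) := by
  rw [plift, Polynomial.sum_def, eval_finset_sum]
  rw [eval_eq_sum, Polynomial.sum_def, Finset.mul_sum]
  apply Finset.sum_congr rfl
  intro i hi
  have hiN : i ≤ N := le_trans (le_natDegree_of_mem_supp i hi) hN
  simp only [eval_mul, eval_pow, eval_C, eval_X, eval_add, eval_one]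
  have key : z ^ (N - i) * (z ^ 2 + 1) ^ i = z ^ N * (z + z⁻¹) ^ i := by
    have h1 : z + z⁻¹ = (z ^ 2 + 1) / z := by field_simp
    have h2 : z ^ N = z ^ (N - i) * z ^ i := by
      rw [← pow_add]
      congr 1
      omega
    rw [h1, div_pow, h2]
    field_simp
  linear_combination (A.coeff i) * key

lemma add_inv_surj (w : ℂ) : ∃ z : ℂ, z ≠ 0 ∧ z + z⁻¹ = w := by
  obtain ⟨z, hz⟩ := Complex.exists_root (f := C 1 * X ^ 2 + C (-w) * X + C 1)
    (by rw [degree_quadratic one_ne_zero]; norm_num)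
  have hz' : z ^ 2 - w * z + 1 = 0 := by
    have := hz
    simp only [IsRoot, eval_add, eval_mul, eval_pow, eval_C, eval_X, one_mul] at this
    linear_combination this
  have hz0 : z ≠ 0 := by
    intro h0
    rw [h0] at hz'
    simp at hz'
  refine ⟨z, hz0, ?_⟩
  have hmul : z * (w - z) = 1 := by linear_combination -hz'
  have : z⁻¹ = w - z := inv_eq_of_mul_eq_one_right hmul
  rw [this]; ring

lemma pow_eq_pow_iff_of_ne (j k : ℕ) (hjk : j ≠ k) : (2 : ℂ) ^ j ≠ (2 : ℂ) ^ k := by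
  intro h
  have : ((2 : ℝ) ^ j : ℂ) = ((2 : ℝ) ^ k : ℂ) := by push_cast; exact_mod_cast h
  have h2 : (2 : ℝ) ^ j = (2 : ℝ) ^ k := by exact_mod_cast this
  rcases Nat.lt_or_ge j k with hlt | hge
  · have : (2:ℝ)^j < (2:ℝ)^k := by
      exact pow_lt_pow_right₀ one_lt_two hlt
    linarith
  · rcases Nat.lt_or_ge k j with hlt' | hge'
    · have : (2:ℝ)^k < (2:ℝ)^j := pow_lt_pow_right₀ one_lt_two hlt'
      linarith
    · omega
lemma pell_c (A B : Polynomial ℂ) (c : ℂ) (hc : c ≠ 0) (hB : B ≠ 0)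
    (hAB : A ^ 2 - (X ^ 2 - C 4) * B ^ 2 = C c) :
    ∃ (u : ℂ) (n : ℕ), 0 < n ∧ u ^ 2 = c ∧ A = C (u / 2) * dickson 1 1 n := by
  have hA : A ≠ 0 := by
    intro h0
    rw [h0] at hAB
    have hx4 : (X ^ 2 - C 4 : Polynomial ℂ) ≠ 0 := by
      intro hx
      have h2' := natDegree_X_pow_sub_C (n := 2) (r := (4:ℂ))
      rw [hx] at h2'
      simp at h2'
    have hdeg : ((0:Polynomial ℂ) ^ 2 - (X ^ 2 - C 4) * B ^ 2).natDegree = 2 + 2 * B.natDegree := by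
      rw [zero_pow (by norm_num), zero_sub, natDegree_neg, natDegree_mul hx4 (pow_ne_zero _ hB),
        natDegree_pow, natDegree_X_pow_sub_C]
    rw [hAB, natDegree_C] at hdeg
    omega
  set N := max A.natDegree (B.natDegree + 1) with hN
  have hNA : A.natDegree ≤ N := le_max_left _ _
  have hNB : B.natDegree ≤ N - 1 := by omega
  have hN1 : 1 ≤ N := by omega
  set P := plift A N + (X ^ 2 - 1) * plift B (N - 1) with hP
  set Q := plift A N - (X ^ 2 - 1) * plift B (N - 1) with hQ
  have evalP : ∀ z : ℂ, z ≠ 0 →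
      P.eval z = z ^ N * (A.eval (z + z⁻¹) + (z - z⁻¹) * B.eval (z + z⁻¹)) := by
    intro z hz
    rw [hP]
    simp only [eval_add, eval_mul, eval_sub, eval_pow, eval_X, eval_one]
    rw [plift_eval A N hNA z hz, plift_eval B (N - 1) hNB z hz]
    have hzz : z ^ N = z ^ (N - 1) * z := by
      rw [← pow_succ]
      congr 1
      omega
    field_simp
    rw [hzz]
    ring
  have evalQ : ∀ z : ℂ, z ≠ 0 →
      Q.eval z = z ^ N * (A.eval (z + z⁻¹) - (z - z⁻¹) * B.eval (z + z⁻¹)) := by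
    intro z hz
    rw [hQ]
    simp only [eval_sub, eval_mul, eval_add, eval_pow, eval_X, eval_one]
    rw [plift_eval A N hNA z hz, plift_eval B (N - 1) hNB z hz]
    have hzz : z ^ N = z ^ (N - 1) * z := by
      rw [← pow_succ]
      congr 1
      omega
    field_simp
    rw [hzz]
    ring
  have key : ∀ z : ℂ, z ≠ 0 → (A.eval (z + z⁻¹)) ^ 2
      - ((z + z⁻¹) ^ 2 - 4) * (B.eval (z + z⁻¹)) ^ 2 = c := by
    intro z hz
    have := congrArg (eval (z + z⁻¹)) hAB
    simpa using this
  have hPQ : P * Q = C c * X ^ (2 * N) := by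
    have hroot : ∀ z : ℂ, z ≠ 0 → (P * Q - C c * X ^ (2 * N)).eval z = 0 := by
      intro z hz
      simp only [eval_sub, eval_mul, eval_pow, eval_C, eval_X]
      rw [evalP z hz, evalQ z hz]
      have h4 : (z - z⁻¹) ^ 2 = (z + z⁻¹) ^ 2 - 4 := by
        field_simp
        ring
      have expand : z ^ N * (A.eval (z + z⁻¹) + (z - z⁻¹) * B.eval (z + z⁻¹)) *
          (z ^ N * (A.eval (z + z⁻¹) - (z - z⁻¹) * B.eval (z + z⁻¹)))
          = z ^ (2 * N) * ((A.eval (z + z⁻¹)) ^ 2 - (z - z⁻¹) ^ 2 * (B.eval (z + z⁻¹)) ^ 2) := by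
        rw [two_mul, pow_add]
        ring
      rw [expand, h4]
      rw [key z hz]
      ring
    have hinf : {z : ℂ | (P * Q - C c * X ^ (2 * N)).IsRoot z}.Infinite := by
      apply Set.Infinite.mono (s := {(0 : ℂ)}ᶜ)
      · intro z hz
        exact hroot z hz
      · exact Set.Finite.infinite_compl (Set.finite_singleton 0)
    have := eq_zero_of_infinite_isRoot _ hinf
    linear_combination this
  -- P is a monomial
  have hPne : P ≠ 0 := by
    intro h0
    rw [h0, zero_mul] at hPQ
    exact (mul_ne_zero (fun hC => hc (by simpa using (C_eq_zero.mp hC)))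
      (pow_ne_zero _ (X_ne_zero (R := ℂ)))) hPQ.symm
  have hPdvd : P ∣ (X : Polynomial ℂ) ^ (2 * N) := by
    have h1 : P ∣ C c * X ^ (2 * N) := ⟨Q, hPQ.symm⟩
    refine h1.trans ⟨C c⁻¹, ?_⟩
    rw [mul_comm (C c), mul_assoc, ← C_mul, mul_inv_cancel₀ hc, C_1, mul_one]
  obtain ⟨k, hk2N, hassoc⟩ := (dvd_prime_pow prime_X (2 * N)).mp hPdvd
  obtain ⟨v, hv⟩ := hassoc
  obtain ⟨r, hr_unit, hCr⟩ := Polynomial.isUnit_iff.mp v.isUnit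
  have hrne : r ≠ 0 := hr_unit.ne_zero
  set u₀ := r⁻¹ with hu₀def
  have hu₀ne : u₀ ≠ 0 := inv_ne_zero hrne
  have hPform : P = C u₀ * X ^ k := by
    have h1 : P * C r = X ^ k := by rw [← hCr] at hv; exact hv
    have : P * C r * C u₀ = X ^ k * C u₀ := by rw [h1]
    rw [mul_assoc, ← C_mul, hu₀def, mul_inv_cancel₀ hrne, C_1, mul_one] at this
    rw [this]; ring
  have hQform : Q = C (c / u₀) * X ^ (2 * N - k) := by
    have hne : C u₀ * (X : Polynomial ℂ) ^ k ≠ 0 :=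
      mul_ne_zero (fun hC => hu₀ne (C_eq_zero.mp hC)) (pow_ne_zero _ X_ne_zero)
    apply mul_left_cancel₀ hne
    conv_lhs => rw [← hPform, hPQ]
    rw [show C u₀ * X ^ k * (C (c / u₀) * X ^ (2 * N - k))
        = C u₀ * C (c / u₀) * (X ^ k * X ^ (2 * N - k)) by ring, ← C_mul, ← pow_add]
    congr 2
    · field_simp
    · omega
  -- scalar identities
  have powsub : ∀ (z : ℂ), z ≠ 0 → ∀ (a b : ℕ), b ≤ a → z ^ a * (z⁻¹) ^ b = z ^ (a - b) := by
    intro z hz a b hba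
    rw [inv_pow, show a = (a - b) + b by omega, pow_add, mul_assoc,
      mul_inv_cancel₀ (pow_ne_zero _ hz), mul_one]
    congr 1
    omega
  have S : ∀ z : ℂ, z ≠ 0 → 2 * z ^ N * A.eval (z + z⁻¹)
      = u₀ * z ^ k + (c / u₀) * z ^ (2 * N - k) := by
    intro z hz
    have e1 : z ^ N * (A.eval (z + z⁻¹) + (z - z⁻¹) * B.eval (z + z⁻¹)) = u₀ * z ^ k := by
      rw [← evalP z hz, hPform]; simp
    have e2 : z ^ N * (A.eval (z + z⁻¹) - (z - z⁻¹) * B.eval (z + z⁻¹))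
        = (c / u₀) * z ^ (2 * N - k) := by
      rw [← evalQ z hz, hQform]; simp
    linear_combination e1 + e2
  have S2 : ∀ z : ℂ, z ≠ 0 → 2 * z ^ N * A.eval (z + z⁻¹)
      = u₀ * z ^ (2 * N - k) + (c / u₀) * z ^ k := by
    intro z hz
    have hzi : z⁻¹ ≠ 0 := inv_ne_zero hz
    have h0 := S z⁻¹ hzi
    rw [inv_inv] at h0
    have h1 := congrArg (fun t => z ^ (2 * N) * t) h0
    have q1 : z ^ (2 * N) * (2 * (z⁻¹) ^ N * A.eval (z⁻¹ + z))
        = 2 * z ^ N * A.eval (z + z⁻¹) := by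
      rw [show z⁻¹ + z = z + z⁻¹ by ring,
        show z ^ (2 * N) * (2 * (z⁻¹) ^ N * A.eval (z + z⁻¹))
          = 2 * (z ^ (2 * N) * (z⁻¹) ^ N) * A.eval (z + z⁻¹) by ring,
        powsub z hz (2 * N) N (by omega), show 2 * N - N = N by omega]
    have q2 : z ^ (2 * N) * (u₀ * (z⁻¹) ^ k + (c / u₀) * (z⁻¹) ^ (2 * N - k))
        = u₀ * z ^ (2 * N - k) + (c / u₀) * z ^ k := by
      rw [mul_add,
        show z ^ (2 * N) * (u₀ * (z⁻¹) ^ k) = u₀ * (z ^ (2 * N) * (z⁻¹) ^ k) by ring,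
        show z ^ (2 * N) * ((c / u₀) * (z⁻¹) ^ (2 * N - k))
          = (c / u₀) * (z ^ (2 * N) * (z⁻¹) ^ (2 * N - k)) by ring,
        powsub z hz (2 * N) k hk2N, powsub z hz (2 * N) (2 * N - k) (by omega),
        show 2 * N - (2 * N - k) = k by omega]
    rw [q1, q2] at h1
    exact h1
  by_cases hkN : k = N
  · -- A would be constant: contradiction
    exfalso
    have hconst : ∀ w : ℂ, A.eval w = (u₀ + c / u₀) / 2 := by
      intro w
      obtain ⟨z, hz, hzw⟩ := add_inv_surj w
      have h0 := S z hz
      rw [hkN, show 2 * N - N = N by omega, hzw] at h0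
      have hzN : z ^ N ≠ 0 := pow_ne_zero _ hz
      have h1 : z ^ N * (2 * A.eval w) = z ^ N * (u₀ + c / u₀) := by
        linear_combination h0
      have h2 := mul_left_cancel₀ hzN h1
      linear_combination h2 / 2
    have hA_eq : A = C ((u₀ + c / u₀) / 2) := by
      apply Polynomial.funext
      intro w
      rw [hconst w, eval_C]
    have hx4 : (X ^ 2 - C 4 : Polynomial ℂ) ≠ 0 := by
      intro hx
      have h2' := natDegree_X_pow_sub_C (n := 2) (r := (4:ℂ))
      rw [hx] at h2'
      simp at h2'
    have hBdeg : ((X ^ 2 - C 4) * B ^ 2).natDegree = 2 + 2 * B.natDegree := by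
      rw [natDegree_mul hx4 (pow_ne_zero _ hB), natDegree_pow, natDegree_X_pow_sub_C]
    have : (X ^ 2 - C 4) * B ^ 2 = A ^ 2 - C c := by linear_combination -hAB
    rw [hA_eq, ← C_pow, ← C_sub] at this
    rw [this, natDegree_C] at hBdeg
    omega
  · -- main case
    have hu₀sq : u₀ ^ 2 = c := by
      have h0 : (u₀ - c / u₀) * ((2:ℂ) ^ k - (2:ℂ) ^ (2 * N - k)) = 0 := by
        have h2 : (2 : ℂ) ≠ 0 := two_ne_zero
        linear_combination S2 2 h2 - S 2 h2
      rcases mul_eq_zero.mp h0 with h1 | h1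
      · have h2 : (u₀ - c / u₀) * u₀ = 0 * u₀ := by rw [h1]
        rw [zero_mul, sub_mul, div_mul_cancel₀ _ hu₀ne, sub_eq_zero] at h2
        rw [sq]
        linear_combination h2
      · exfalso
        exact pow_eq_pow_iff_of_ne k (2 * N - k) (by omega) (by linear_combination h1)
    set n := max k (2 * N - k) - N with hn
    have hnpos : 0 < n := by omega
    have hsplit : ∀ z : ℂ, z ≠ 0 → z ^ k + z ^ (2 * N - k) = z ^ N * (z ^ n + z⁻¹ ^ n) := by
      intro z hz
      have hnN : n ≤ N := by omega
      rw [mul_add, ← pow_add, powsub z hz N n hnN]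
      rcases le_or_gt N k with hNk | hNk
      · rw [show N + n = k by omega, show N - n = 2 * N - k by omega]
      · rw [show N + n = 2 * N - k by omega, show N - n = k by omega]
        ring
    have hcu : c / u₀ = u₀ := by
      rw [← hu₀sq, sq]
      exact mul_div_cancel_right₀ u₀ hu₀ne
    have hAeval : ∀ w : ℂ, A.eval w = (u₀ / 2) * (dickson 1 (1:ℂ) n).eval w := by
      intro w
      obtain ⟨z, hz, hzw⟩ := add_inv_surj w
      have h0 := S z hz
      rw [hcu, hzw] at h0
      have hsp := hsplit z hz
      have h1 : z ^ N * (2 * A.eval w) = z ^ N * (u₀ * (z ^ n + z⁻¹ ^ n)) := by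
        linear_combination h0 + u₀ * hsp
      have h2 := mul_left_cancel₀ (pow_ne_zero N hz) h1
      have h3 : (dickson 1 (1:ℂ) n).eval w = z ^ n + z⁻¹ ^ n := by
        rw [← hzw]
        exact dickson_one_one_eval_add_inv z z⁻¹ (mul_inv_cancel₀ hz) n
      rw [h3]
      linear_combination h2 / 2
    refine ⟨u₀, n, hnpos, hu₀sq, ?_⟩
    apply Polynomial.funext
    intro w
    rw [hAeval w, eval_mul, eval_C]


lemma const_of_sq_sub_sq (E F : Polynomial ℂ) (d : ℂ) (hd : d ≠ 0)
    (hEF : E ^ 2 - F ^ 2 = C d) : E.natDegree = 0 := by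
  have h1 : (E - F) * (E + F) = C d := by linear_combination hEF
  have hCd : (C d : Polynomial ℂ) ≠ 0 := fun h0 => hd (C_eq_zero.mp h0)
  have h2 : E - F ≠ 0 := fun h0 => hCd (by rw [← h1, h0, zero_mul])
  have h3 : E + F ≠ 0 := fun h0 => hCd (by rw [← h1, h0, mul_zero])
  have h4 : (E - F).natDegree + (E + F).natDegree = 0 := by
    rw [← natDegree_mul h2 h3, h1, natDegree_C]
  have h5 : E = C (2⁻¹ : ℂ) * ((E - F) + (E + F)) := by
    have h6 : ((E - F) + (E + F)) = C (2 : ℂ) * E := by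
      rw [show (C (2:ℂ)) = (2 : Polynomial ℂ) from map_ofNat C 2]
      ring
    rw [h6, ← mul_assoc, ← C_mul]
    norm_num
  refine Nat.le_zero.mp ?_
  calc E.natDegree = (C (2⁻¹ : ℂ) * ((E - F) + (E + F))).natDegree := by rw [← h5]
    _ ≤ ((E - F) + (E + F)).natDegree := natDegree_C_mul_le _ _
    _ ≤ max (E - F).natDegree (E + F).natDegree := natDegree_add_le _ _
    _ = 0 := by omega

lemma linear_comp_pair (a b : ℂ) (ha : a ≠ 0) :
    (C a * X + C b).comp (C a⁻¹ * X + C (-(b/a))) = X ∧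
    (C a⁻¹ * X + C (-(b/a))).comp (C a * X + C b) = X := by
  constructor <;>
  · apply Polynomial.funext
    intro w
    simp only [eval_comp, eval_add, eval_mul, eval_C, eval_X]
    field_simp
    ring

lemma dickson_sq_eval (m : ℕ) (w : ℂ) :
    ((dickson 1 (1:ℂ) m).eval w) ^ 2 = (dickson 1 (1:ℂ) (2 * m)).eval w + 2 := by
  obtain ⟨z, hz, hzw⟩ := add_inv_surj w
  rw [← hzw, dickson_one_one_eval_add_inv z z⁻¹ (mul_inv_cancel₀ hz),
    dickson_one_one_eval_add_inv z z⁻¹ (mul_inv_cancel₀ hz)]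
  have h1 : z ^ m * (z⁻¹) ^ m = 1 := by
    rw [← mul_pow, mul_inv_cancel₀ hz, one_pow]
  have h2 : z ^ (2 * m) = (z ^ m) ^ 2 := by rw [← pow_mul, mul_comm]
  have h3 : (z⁻¹) ^ (2 * m) = ((z⁻¹) ^ m) ^ 2 := by rw [← pow_mul, mul_comm]
  rw [h2, h3]
  linear_combination 2 * h1

theorem decomp_x_sq_sub_four_mul_sq (g h p : Polynomial ℂ)
    (hg : g ≠ 0) (hh : h ≠ 0) (hp : p ≠ 0)
    (hgh : g.comp h = (Polynomial.X ^ 2 - 4) * p ^ 2) :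
    ∃ μ ν : Polynomial ℂ, μ.degree = 1 ∧
      μ.comp ν = Polynomial.X ∧ ν.comp μ = Polynomial.X ∧
      ∃ (B D : Polynomial ℂ) (n : ℕ), 0 < n ∧
        ((g.comp μ = Polynomial.X * B ^ 2 ∧
            ν.comp h = (Polynomial.X ^ 2 - 4) * D ^ 2) ∨
         (g.comp μ = (Polynomial.X ^ 2 - 4) * B ^ 2 ∧
            ν.comp h = Polynomial.dickson 1 (1 : ℂ) n)) := by
  classical
  have hC4 : (C (4:ℂ)) = (4 : Polynomial ℂ) := map_ofNat C 4
  have hC2 : (C (2:ℂ)) = (2 : Polynomial ℂ) := map_ofNat C 2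
  have hx4 : (X ^ 2 - 4 : Polynomial ℂ) ≠ 0 := by
    intro h0
    have h2 := natDegree_X_pow_sub_C (n := 2) (r := (4:ℂ))
    rw [hC4, h0] at h2
    simp at h2
  have hRdeg : ((X ^ 2 - 4 : Polynomial ℂ) * p ^ 2).natDegree = 2 + 2 * p.natDegree := by
    rw [natDegree_mul hx4 (pow_ne_zero _ hp), natDegree_pow]
    congr 1
    rw [← hC4]
    exact natDegree_X_pow_sub_C
  have hcomp_ne : g.comp h ≠ 0 := by
    rw [hgh]; exact mul_ne_zero hx4 (pow_ne_zero _ hp)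
  have hhdeg : 0 < h.natDegree := by
    rcases Nat.eq_zero_or_pos h.natDegree with h0 | h0
    · exfalso
      obtain ⟨a, ha⟩ := natDegree_eq_zero.mp h0
      have hc : g.comp h = C (g.eval a) := by rw [← ha, comp_C]
      rw [hgh] at hc
      rw [hc, natDegree_C] at hRdeg
      omega
    · exact h0
  have hsub_ne : ∀ b : ℂ, h - C b ≠ 0 := by
    intro b h0
    have : h = C b := sub_eq_zero.mp h0
    rw [this, natDegree_C] at hhdeg
    exact Nat.lt_irrefl 0 hhdeg
  have hfac : (X ^ 2 - 4 : Polynomial ℂ) = (X - C 2) * (X - C (-2)) := by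
    rw [map_neg, hC2]
    ring
  have hoddRHS : ∀ a : ℂ, Odd (rootMultiplicity a (g.comp h)) ↔ (a = 2 ∨ a = -2) := by
    intro a
    have hm1ne : ((X - C 2) * (X - C (-2)) : Polynomial ℂ) ≠ 0 := by rw [← hfac]; exact hx4
    have hmne : ((X - C 2) * (X - C (-2)) : Polynomial ℂ) * p ^ 2 ≠ 0 :=
      mul_ne_zero hm1ne (pow_ne_zero _ hp)
    have hmval : rootMultiplicity a ((X - C 2) * (X - C (-2)) * p ^ 2)
        = rootMultiplicity a (X - C 2) + rootMultiplicity a (X - C (-2))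
          + 2 * rootMultiplicity a p := by
      rw [rootMultiplicity_mul hmne, rootMultiplicity_mul hm1ne, rootMultiplicity_pow_c p 2 hp]
    rw [hgh, hfac, hmval, rootMultiplicity_X_sub_C, rootMultiplicity_X_sub_C]
    by_cases h1 : a = 2
    · have h2 : ¬ (a = -2) := by rw [h1]; norm_num
      rw [if_pos h1, if_neg h2]
      constructor
      · intro _; exact Or.inl h1
      · intro _; rw [Nat.odd_iff]; omega
    · by_cases h2 : a = -2
      · rw [if_neg h1, if_pos h2]
        constructor
        · intro _; exact Or.inr h2
        · intro _; rw [Nat.odd_iff]; omega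
      · rw [if_neg h1, if_neg h2]
        constructor
        · intro hoddv
          exfalso
          rw [Nat.odd_iff] at hoddv
          omega
        · intro hor; tauto
  have hco : ∀ a : ℂ, rootMultiplicity a (g.comp h)
      = rootMultiplicity (h.eval a) g * rootMultiplicity a (h - C (h.eval a)) :=
    fun a => rootMultiplicity_comp_c g h hg hhdeg a
  have hOddRoots : ∀ b : ℂ, Odd (rootMultiplicity b g) → ∀ α : ℂ,
      Odd (rootMultiplicity α (h - C b)) → ((α = 2 ∨ α = -2) ∧ h.eval α = b) := by
    intro b hb α hα
    have hroot : h.eval α = b := by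
      have hpos : 0 < rootMultiplicity α (h - C b) := by
        rcases hα with ⟨k, hk⟩; omega
      have h1 := (rootMultiplicity_pos (hsub_ne b)).mp hpos
      have h2 : (h - C b).eval α = 0 := h1
      simp only [eval_sub, eval_C] at h2
      exact sub_eq_zero.mp h2
    refine ⟨?_, hroot⟩
    apply (hoddRHS α).mp
    rw [hco α, hroot]
    exact Nat.odd_mul.mpr ⟨hb, hα⟩
  set β := h.eval 2 with hβdef
  set β' := h.eval (-2) with hβ'def
  have hodd2 : Odd (rootMultiplicity 2 (g.comp h)) := (hoddRHS 2).mpr (Or.inl rfl)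
  have hoddm2 : Odd (rootMultiplicity (-2) (g.comp h)) := (hoddRHS (-2)).mpr (Or.inr rfl)
  have hb2 : Odd (rootMultiplicity β g) ∧ Odd (rootMultiplicity 2 (h - C β)) := by
    rw [hco 2, ← hβdef] at hodd2
    exact Nat.odd_mul.mp hodd2
  have hbm2 : Odd (rootMultiplicity β' g) ∧ Odd (rootMultiplicity (-2) (h - C β')) := by
    rw [hco (-2), ← hβ'def] at hoddm2
    exact Nat.odd_mul.mp hoddm2
  by_cases hI : β = β'
  · -- CASE I : h(2) = h(-2)
    have hm2' : Odd (rootMultiplicity (-2) (h - C β)) := by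
      rw [hI]; exact hbm2.2
    have hEvens : ∀ α : ℂ, α ≠ 2 → α ≠ -2 → Even (rootMultiplicity α (h - C β)) := by
      intro α h1 h2
      by_contra hodd'
      rw [Nat.not_even_iff_odd] at hodd'
      obtain ⟨hor, -⟩ := hOddRoots β hb2.1 α hodd'
      tauto
    obtain ⟨D₀, hhb⟩ := odd_two_extract (h - C β) (hsub_ne β) 2 (-2) (by norm_num)
      hb2.2 hm2' hEvens
    have hD₀ne : D₀ ≠ 0 := by
      intro h0
      rw [h0] at hhb
      exact hsub_ne β (by rw [hhb]; ring)
    by_cases hsingle : ∀ b : ℂ, b ≠ β → Even (rootMultiplicity b g)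
    · -- conclusion (1)
      obtain ⟨B₀, hgB⟩ := odd_one_extract g hg β hb2.1 hsingle
      obtain ⟨hcmp1, hcmp2⟩ := linear_comp_pair 1 β one_ne_zero
      refine ⟨C 1 * X + C β, C (1:ℂ)⁻¹ * X + C (-(β/1)), degree_linear one_ne_zero,
        hcmp1, hcmp2, B₀.comp (C 1 * X + C β), D₀, 1, one_pos, Or.inl ⟨?_, ?_⟩⟩
      · apply Polynomial.funext
        intro w
        have e1 := congrArg (eval (eval w (C (1:ℂ) * X + C β))) hgB
        simp only [eval_comp, eval_mul, eval_add, eval_sub, eval_pow, eval_C, eval_X,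
          one_mul] at e1 ⊢
        linear_combination e1
      · apply Polynomial.funext
        intro w
        have e1 := congrArg (eval w) hhb
        simp only [eval_comp, eval_mul, eval_add, eval_sub, eval_pow, eval_C, eval_X,
          eval_ofNat, eval_neg, inv_one, one_mul, div_one] at e1 ⊢
        linear_combination e1
    · -- conclusion (2) via Pell
      push_neg at hsingle
      obtain ⟨b', hb'β, hb'odd'⟩ := hsingle
      rw [Nat.not_even_iff_odd] at hb'odd'
      have hEb' : ∀ α : ℂ, Even (rootMultiplicity α (h - C b')) := by
        intro α
        by_contra hodd'
        rw [Nat.not_even_iff_odd] at hodd'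
        obtain ⟨hor, heval⟩ := hOddRoots b' hb'odd' α hodd'
        rcases hor with h1 | h1
        · rw [h1] at heval; exact hb'β (by rw [← heval, ← hβdef])
        · rw [h1] at heval; exact hb'β (by rw [← heval, ← hβ'def, ← hI])
      obtain ⟨E, hE⟩ := sq_of_even_rootMultiplicity (h - C b') (hsub_ne b') hEb'
      have hevg : ∀ b'' : ℂ, b'' ≠ β → b'' ≠ b' → Even (rootMultiplicity b'' g) := by
        intro b'' h1 h2
        by_contra hodd'
        rw [Nat.not_even_iff_odd] at hodd'
        have hEb'' : ∀ α : ℂ, Even (rootMultiplicity α (h - C b'')) := by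
          intro α
          by_contra hodd''
          rw [Nat.not_even_iff_odd] at hodd''
          obtain ⟨hor, heval⟩ := hOddRoots b'' hodd' α hodd''
          rcases hor with h3 | h3
          · rw [h3] at heval; exact h1 (by rw [← heval, ← hβdef])
          · rw [h3] at heval; exact h1 (by rw [← heval, ← hβ'def, ← hI])
        obtain ⟨E'', hE''⟩ := sq_of_even_rootMultiplicity (h - C b'') (hsub_ne b'') hEb''
        have hd : E'' ^ 2 - E ^ 2 = C (b' - b'') := by
          rw [← hE, ← hE'', C_sub]
          ring
        have h0 := const_of_sq_sub_sq E'' E (b' - b'') (sub_ne_zero.mpr (Ne.symm h2)) hd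
        have h4 : (h - C b'').natDegree = 0 := by
          rw [hE'', natDegree_pow, h0, mul_zero]
        rw [natDegree_sub_C] at h4
        omega
      obtain ⟨B₀, hgB⟩ := odd_two_extract g hg β b' (Ne.symm hb'β) hb2.1 hb'odd' hevg
      have hcne : β - b' ≠ 0 := sub_ne_zero.mpr (Ne.symm hb'β)
      have hpell_in : E ^ 2 - (X ^ 2 - C 4) * D₀ ^ 2 = C (β - b') := by
        apply Polynomial.funext
        intro w
        have e1 := congrArg (eval w) hhb
        have e2 := congrArg (eval w) hE
        simp only [eval_sub, eval_mul, eval_pow, eval_C, eval_X, eval_neg, eval_ofNat] at e1 e2 ⊢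
        linear_combination e1 - e2
      obtain ⟨u, m, hm, hu2, hEform⟩ := pell_c E D₀ (β - b') hcne hD₀ne hpell_in
      have ha : (β - b') / 4 ≠ 0 := div_ne_zero hcne (by norm_num)
      obtain ⟨hcmp1, hcmp2⟩ := linear_comp_pair ((β - b') / 4) ((β - b') / 2 + b') ha
      refine ⟨C ((β - b') / 4) * X + C ((β - b') / 2 + b'),
        C ((β - b') / 4)⁻¹ * X + C (-(((β - b') / 2 + b') / ((β - b') / 4))),
        degree_linear ha, hcmp1, hcmp2,
        C ((β - b') / 4) * (B₀.comp (C ((β - b') / 4) * X + C ((β - b') / 2 + b'))),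
        1, 2 * m, by omega, Or.inr ⟨?_, ?_⟩⟩
      · apply Polynomial.funext
        intro w
        have e1 := congrArg
          (eval (eval w (C ((β - b') / 4) * X + C ((β - b') / 2 + b')))) hgB
        simp only [eval_comp, eval_mul, eval_add, eval_sub, eval_pow, eval_C, eval_X,
          eval_ofNat] at e1 ⊢
        linear_combination e1
      · apply Polynomial.funext
        intro w
        have e2 := congrArg (eval w) hE
        have e3 := congrArg (eval w) hEform
        have e4 := dickson_sq_eval m w
        simp only [eval_comp, eval_mul, eval_add, eval_sub, eval_pow, eval_C, eval_X,
          eval_neg, eval_ofNat] at e2 e3 ⊢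
        have hhw : h.eval w = ((β - b') / 4) * ((dickson 1 (1:ℂ) (2 * m)).eval w)
            + ((β - b') / 2 + b') := by
          linear_combination e2 + (E.eval w + u / 2 * (dickson 1 (1:ℂ) m).eval w) * e3
            + (u ^ 2 / 4) * e4 + (((dickson 1 (1:ℂ) (2 * m)).eval w + 2) / 4) * hu2
        rw [hhw]
        field_simp
        ring
  · -- CASE II : h(2) ≠ h(-2)
    have hEvens2 : ∀ α : ℂ, α ≠ 2 → Even (rootMultiplicity α (h - C β)) := by
      intro α h1
      by_contra hodd'
      rw [Nat.not_even_iff_odd] at hodd'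
      obtain ⟨hor, heval⟩ := hOddRoots β hb2.1 α hodd'
      rcases hor with h3 | h3
      · exact h1 h3
      · rw [h3] at heval
        exact hI (by rw [hβ'def, heval])
    have hEvens2' : ∀ α : ℂ, α ≠ -2 → Even (rootMultiplicity α (h - C β')) := by
      intro α h1
      by_contra hodd'
      rw [Nat.not_even_iff_odd] at hodd'
      obtain ⟨hor, heval⟩ := hOddRoots β' hbm2.1 α hodd'
      rcases hor with h3 | h3
      · rw [h3] at heval
        exact hI (by rw [hβdef, heval])
      · exact h1 h3
    obtain ⟨E, hhb⟩ := odd_one_extract (h - C β) (hsub_ne β) 2 hb2.2 hEvens2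
    obtain ⟨F, hhb'⟩ := odd_one_extract (h - C β') (hsub_ne β') (-2) hbm2.2 hEvens2'
    have hEne : E ≠ 0 := by
      intro h0
      rw [h0] at hhb
      exact hsub_ne β (by rw [hhb]; ring)
    have hFne : F ≠ 0 := by
      intro h0
      rw [h0] at hhb'
      exact hsub_ne β' (by rw [hhb']; ring)
    have hhodd : Odd h.natDegree := by
      have h1 : (h - C β).natDegree = 1 + 2 * E.natDegree := by
        rw [hhb, natDegree_mul (X_sub_C_ne_zero 2) (pow_ne_zero _ hEne),
          natDegree_X_sub_C, natDegree_pow]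
      rw [natDegree_sub_C] at h1
      exact ⟨E.natDegree, by omega⟩
    have hevg : ∀ b'' : ℂ, b'' ≠ β → b'' ≠ β' → Even (rootMultiplicity b'' g) := by
      intro b'' h1 h2
      by_contra hodd'
      rw [Nat.not_even_iff_odd] at hodd'
      have hEb'' : ∀ α : ℂ, Even (rootMultiplicity α (h - C b'')) := by
        intro α
        by_contra hodd''
        rw [Nat.not_even_iff_odd] at hodd''
        obtain ⟨hor, heval⟩ := hOddRoots b'' hodd' α hodd''
        rcases hor with h3 | h3
        · rw [h3] at heval; exact h1 (by rw [← heval, ← hβdef])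
        · rw [h3] at heval; exact h2 (by rw [← heval, ← hβ'def])
      obtain ⟨E'', hE''⟩ := sq_of_even_rootMultiplicity (h - C b'') (hsub_ne b'') hEb''
      have h4 : (h - C b'').natDegree = 2 * E''.natDegree := by
        rw [hE'', natDegree_pow]
      rw [natDegree_sub_C] at h4
      rcases hhodd with ⟨k, hk⟩
      omega
    obtain ⟨B₀, hgB⟩ := odd_two_extract g hg β β' hI hb2.1 hbm2.1 hevg
    have hcne : β - β' ≠ 0 := sub_ne_zero.mpr hI
    have hc2ne : (β - β') ^ 2 ≠ 0 := pow_ne_zero 2 hcne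
    have hBpne : (C (2:ℂ)) * (E * F) ≠ 0 := by
      refine mul_ne_zero ?_ (mul_ne_zero hEne hFne)
      rw [hC2]
      norm_num
    have hApell : (C (2:ℂ) * h - C (β + β')) ^ 2
        - (X ^ 2 - C 4) * (C (2:ℂ) * (E * F)) ^ 2 = C ((β - β') ^ 2) := by
      apply Polynomial.funext
      intro w
      have e1 := congrArg (eval w) hhb
      have e2 := congrArg (eval w) hhb'
      simp only [eval_sub, eval_mul, eval_add, eval_pow, eval_C, eval_X, eval_neg,
        eval_ofNat] at e1 e2 ⊢
      linear_combination (4 * (h.eval w - β)) * e2 + (4 * (w + 2) * (F.eval w) ^ 2) * e1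
    obtain ⟨u, n, hn, hu2, hAform⟩ := pell_c (C (2:ℂ) * h - C (β + β'))
      (C (2:ℂ) * (E * F)) ((β - β') ^ 2) hc2ne hBpne hApell
    have huner : u ≠ 0 := by
      intro h0
      rw [h0] at hu2
      exact hc2ne (by rw [← hu2]; ring)
    have ha : u / 4 ≠ 0 := div_ne_zero huner (by norm_num)
    obtain ⟨hcmp1, hcmp2⟩ := linear_comp_pair (u / 4) ((β + β') / 2) ha
    refine ⟨C (u / 4) * X + C ((β + β') / 2),
      C (u / 4)⁻¹ * X + C (-(((β + β') / 2) / (u / 4))),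
      degree_linear ha, hcmp1, hcmp2,
      C ((β - β') / 4) * (B₀.comp (C (u / 4) * X + C ((β + β') / 2))),
      1, n, hn, Or.inr ⟨?_, ?_⟩⟩
    · apply Polynomial.funext
      intro w
      have e1 := congrArg (eval (eval w (C (u / 4) * X + C ((β + β') / 2)))) hgB
      simp only [eval_comp, eval_mul, eval_add, eval_sub, eval_pow, eval_C, eval_X,
        eval_ofNat] at e1 ⊢
      linear_combination e1 + ((w ^ 2 / 16)
        * (B₀.eval (u / 4 * w + (β + β') / 2)) ^ 2) * hu2
    · apply Polynomial.funext
      intro w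
      have eA := congrArg (eval w) hAform
      simp only [eval_comp, eval_mul, eval_add, eval_sub, eval_pow, eval_C, eval_X,
        eval_neg, eval_ofNat] at eA ⊢
      have hhw : h.eval w = (u / 4) * ((dickson 1 (1:ℂ) n).eval w) + (β + β') / 2 := by
        linear_combination eA / 2
      rw [hhw]
      field_simp
      ring
end
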